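/- arXiv:2011.11963 — 7 statements merged into one kernel-verified Lean document; each statement's English description precedes it below -/
import Mathlib

section
/- Let A be an n×n Hermitian complex matrix and ρ_i an n×n density matrix. If a state ρ = Uρ_iU† (U unitary) minimizes, or maximizes, the expectation value tr(ρ'A) among all states ρ' = Vρ_iV† with V unitary, then ρ commutes with A (i.e., passive and maximally active states are incoherent). -/
open Matrix Kronecker
open scoped ComplexOrder

attribute [local instance] Matrix.frobeniusSeminormedAddCommGroup
  Matrix.frobeniusNormedAddCommGroup Matrix.frobeniusNormedSpace

noncomputable section

namespace QSLPaper

/-- `U` is a unitary matrix. -/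
def IsUnitary {ι : Type*} [Fintype ι] [DecidableEq ι] (U : Matrix ι ι ℂ) : Prop :=
  Uᴴ * U = 1

/-- `ρ` is a density matrix: positive semidefinite with unit trace. -/
def IsDensity {ι : Type*} [Fintype ι] [DecidableEq ι] (ρ : Matrix ι ι ℂ) : Prop :=
  ρ.PosSemidef ∧ ρ.trace = 1

/-- `ρ` is passive relative to the observable `A` and the initial state `ρi`:
`tr(ρA) ≤ tr(VρiV†A)` for every unitary `V`. -/
def IsPassive {ι : Type*} [Fintype ι] [DecidableEq ι] (A ρi ρ : Matrix ι ι ℂ) : Prop :=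
  ∀ V : Matrix ι ι ℂ, IsUnitary V → ((ρ * A).trace).re ≤ (((V * ρi * Vᴴ) * A).trace).re

/-- `ρ` is a passive state: a state (unitary conjugate of `ρi`) which is passive. -/
def IsPassiveState {ι : Type*} [Fintype ι] [DecidableEq ι] (A ρi ρ : Matrix ι ι ℂ) : Prop :=
  (∃ U, IsUnitary U ∧ ρ = U * ρi * Uᴴ) ∧ IsPassive A ρi ρ

/-- `P(ρi)`: the set of unitaries transforming `ρi` into a passive state. -/
def PassivizingSet {ι : Type*} [Fintype ι] [DecidableEq ι] (A ρi : Matrix ι ι ℂ) :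
    Set (Matrix ι ι ℂ) :=
  {U | IsUnitary U ∧ IsPassive A ρi (U * ρi * Uᴴ)}

/-- There is a continuous family of Hermitian Hamiltonians on `[0,τ]` with
`tr(H(t)²) ≤ b` driving `ρ0` (via the von Neumann equation) to a state satisfying `final`
in time `τ`. -/
def ReachesIn {ι : Type*} [Fintype ι] [DecidableEq ι]
    (ρ0 : Matrix ι ι ℂ) (final : Matrix ι ι ℂ → Prop) (b τ : ℝ) : Prop :=
  ∃ H ρ : ℝ → Matrix ι ι ℂ,
    ContinuousOn H (Set.Icc 0 τ) ∧
    (∀ t ∈ Set.Icc (0:ℝ) τ, (H t).IsHermitian) ∧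
    (∀ t ∈ Set.Icc (0:ℝ) τ, ((H t * H t).trace).re ≤ b) ∧
    ρ 0 = ρ0 ∧
    (∀ t ∈ Set.Icc (0:ℝ) τ,
      HasDerivWithinAt ρ ((-Complex.I) • (H t * ρ t - ρ t * H t)) (Set.Icc 0 τ) t) ∧
    final (ρ τ)

/-- The passivization time: the infimum of times in which `ρi` can be driven to a passive
state by a Hamiltonian of bandwidth at most `ω²`. -/
def tauPas {ι : Type*} [Fintype ι] [DecidableEq ι] (A ρi : Matrix ι ι ℂ) (ω : ℝ) : ℝ :=
  sInf {τ | 0 ≤ τ ∧ ReachesIn ρi (IsPassive A ρi) (ω^2) τ}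

/-- `e` is an orthonormal family (hence basis) of `ℂⁿ`. -/
def IsONBasis {n : ℕ} (e : Fin n → (Fin n → ℂ)) : Prop :=
  ∀ j k, star (e j) ⬝ᵥ e k = if j = k then 1 else 0

/-- The discrepancy: given the eigenvalue lists `a` (of `A`), `p` (of `ρi`) and `q`
(of the reference passive state), it is the sum over the distinct eigenvalues `x` of `A`
of the cardinality of the multiset difference `{p k : a k = x} \ {q k : a k = x}`. -/
def discrepancy {n : ℕ} (a p q : Fin n → ℝ) : ℕ := by
  classical
  exact ∑ x ∈ Finset.univ.image a,
    ((((Finset.univ.filter fun k => a k = x)).val.map p)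
      - (((Finset.univ.filter fun k => a k = x)).val.map q)).card

attribute [local instance] Matrix.frobeniusNormedRing Matrix.frobeniusNormedAlgebra

/-- If a state `ρ = UρiU†` minimizes, or maximizes, `tr(ρ'A)` among all
states `ρ' = VρiV†` with `V` unitary, then `ρ` commutes with `A`. -/
theorem passive_and_maximally_active_states_are_incoherent
    {n : ℕ} (hn : 1 ≤ n) (A ρi : Matrix (Fin n) (Fin n) ℂ)
    (hA : A.IsHermitian) (hρi : IsDensity ρi)
    (U : Matrix (Fin n) (Fin n) ℂ) (hU : IsUnitary U)
    (ρ : Matrix (Fin n) (Fin n) ℂ) (hρ : ρ = U * ρi * Uᴴ)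
    (hext : (∀ V : Matrix (Fin n) (Fin n) ℂ, IsUnitary V →
                ((ρ * A).trace).re ≤ (((V * ρi * Vᴴ) * A).trace).re) ∨
            (∀ V : Matrix (Fin n) (Fin n) ℂ, IsUnitary V →
                (((V * ρi * Vᴴ) * A).trace).re ≤ ((ρ * A).trace).re)) :
    ρ * A = A * ρ := by
  classical
  have hρH : ρᴴ = ρ := by
    rw [hρ]
    simp [Matrix.conjTranspose_mul, Matrix.mul_assoc, hρi.1.1.eq]
  set C : Matrix (Fin n) (Fin n) ℂ := ρ * A - A * ρ with hC
  have hCs : Cᴴ = -C := by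
    simp [hC, Matrix.conjTranspose_mul, hρH, hA.eq]
  set E : ℝ → Matrix (Fin n) (Fin n) ℂ := fun t => NormedSpace.exp (t • C) with hE
  set F : ℝ → Matrix (Fin n) (Fin n) ℂ := fun t => NormedSpace.exp (t • (-C)) with hF
  have hEF : ∀ t : ℝ, (E t)ᴴ = F t := fun t => by
    rw [hE, hF]
    simp only
    rw [← Matrix.exp_conjTranspose, Matrix.conjTranspose_smul, star_trivial, hCs]
  have hFE : ∀ t : ℝ, F t * E t = 1 := fun t => by
    rw [hE, hF]
    simp only
    rw [← Matrix.exp_add_of_commute]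
    · simp
    · simpa using (((Commute.refl C).neg_left).smul_left t).smul_right t
  have hE0 : E 0 = 1 := by simp [hE]
  have hF0 : F 0 = 1 := by simp [hF]
  -- each E t * U is unitary and gives the state E t * ρ * F t
  have hVunit : ∀ t : ℝ, IsUnitary (E t * U) := fun t => by
    unfold IsUnitary
    rw [Matrix.conjTranspose_mul, hEF, Matrix.mul_assoc, ← Matrix.mul_assoc (F t), hFE,
      Matrix.one_mul, hU]
  have hVstate : ∀ t : ℝ, (E t * U) * ρi * (E t * U)ᴴ = E t * ρ * F t := fun t => by
    rw [Matrix.conjTranspose_mul, hEF, hρ]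
    simp only [Matrix.mul_assoc]
  -- continuous linear functional Re ∘ trace
  set L : Matrix (Fin n) (Fin n) ℂ →L[ℝ] ℝ :=
    (Complex.reLm.comp
      ((Matrix.traceLinearMap (Fin n) ℂ ℂ).restrictScalars ℝ)).toContinuousLinearMap with hL
  have hLval : ∀ M : Matrix (Fin n) (Fin n) ℂ, L M = (M.trace).re := fun _ => rfl
  set g : ℝ → ℝ := fun t => L (E t * ρ * F t * A) with hg
  have hEd : HasDerivAt E C 0 := by
    have h := hasDerivAt_exp_smul_const (𝕂 := ℝ) C 0
    rw [hE]; exact h.congr_deriv (by simp)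
  have hFd : HasDerivAt F (-C) 0 := by
    have h := hasDerivAt_exp_smul_const (𝕂 := ℝ) (-C) 0
    rw [hF]; exact h.congr_deriv (by simp)
  have hd : HasDerivAt (fun t => E t * ρ * F t * A) ((C * ρ - ρ * C) * A) 0 := by
    have h := ((hEd.mul_const ρ).mul hFd).mul_const A
    rw [hE0, hF0] at h
    refine h.congr_deriv ?_
    noncomm_ring
  have hgd : HasDerivAt g (L ((C * ρ - ρ * C) * A)) 0 :=
    L.hasFDerivAt.comp_hasDerivAt 0 hd
  have hg0 : g 0 = ((ρ * A).trace).re := by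
    rw [hg]; simp only [hE0, hF0, Matrix.one_mul, Matrix.mul_one]; exact hLval _
  have hgt : ∀ t : ℝ, g t = (((E t * U) * ρi * (E t * U)ᴴ * A).trace).re := fun t => by
    rw [hg]; simp only [hVstate t]; exact hLval _
  have key : L ((C * ρ - ρ * C) * A) = 0 := by
    rcases hext with h | h
    · refine IsLocalMin.hasDerivAt_eq_zero ?_ hgd
      refine Filter.Eventually.of_forall fun t => ?_
      rw [hg0, hgt t]
      exact h _ (hVunit t)
    · refine IsLocalMax.hasDerivAt_eq_zero ?_ hgd
      refine Filter.Eventually.of_forall fun t => ?_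
      rw [hg0, hgt t]
      exact h _ (hVunit t)
  -- turn key into trace identity
  have htr : ((C * ρ - ρ * C) * A).trace = -((Cᴴ * C).trace) := by
    have h1 : ((C * ρ - ρ * C) * A).trace = (C * C).trace := by
      rw [Matrix.sub_mul, Matrix.trace_sub, Matrix.mul_assoc, Matrix.mul_assoc,
        Matrix.trace_mul_comm ρ (C * A), Matrix.mul_assoc]
      rw [← Matrix.trace_sub, ← Matrix.mul_sub, ← hC]
    have h2 : Cᴴ * C = -(C * C) := by rw [hCs, Matrix.neg_mul]
    rw [h1, h2, Matrix.trace_neg, neg_neg]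
  have hre : ((Cᴴ * C).trace).re = 0 := by
    have := key
    rw [hLval, htr] at this
    simpa using this
  have hC0 : C = 0 := by
    have hs : ∑ j, ∑ k, Complex.normSq (C k j) = 0 := by
      rw [← hre]
      simp only [Matrix.trace, Matrix.diag, Matrix.mul_apply, Matrix.conjTranspose_apply,
        Complex.re_sum]
      refine Finset.sum_congr rfl fun j _ => Finset.sum_congr rfl fun k _ => ?_
      simp [Complex.normSq_apply, Complex.mul_re, mul_comm]
    ext k j
    have h1 := (Finset.sum_eq_zero_iff_of_nonneg
      (fun j _ => Finset.sum_nonneg fun k _ => Complex.normSq_nonneg _)).mp hs j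
      (Finset.mem_univ j)
    have h2 := (Finset.sum_eq_zero_iff_of_nonneg
      (fun k _ => Complex.normSq_nonneg _)).mp h1 k (Finset.mem_univ k)
    simpa using Complex.normSq_eq_zero.mp h2
  have := sub_eq_zero.mp (hC ▸ hC0)
  exact this

end QSLPaper
end
end

section
/- Suppose ρ_i is not passive, and suppose the passivization time is attained: there are a continuous family H : [0,τ_pas] → {Hermitian n×n matrices} with tr(H(t)²) ≤ ω² for all t and a differentiable ρ : [0,τ_pas] → M_n(ℂ) with ρ(0) = ρ_i, ρ'(t) = -i[H(t),ρ(t)] for all t, and ρ(τ_pas) passive. Then tr(H(t)²) = ω² for every t ∈ [0,τ_pas] (time-optimal Hamiltonians saturate the bounded bandwidth condition). -/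
open Matrix Kronecker
open scoped ComplexOrder

attribute [local instance] Matrix.frobeniusSeminormedAddCommGroup
  Matrix.frobeniusNormedAddCommGroup Matrix.frobeniusNormedSpace

noncomputable section

namespace QSLPaper

set_option maxHeartbeats 8000000 in
/-- time-optimal Hamiltonians saturate the bounded bandwidth condition. -/
theorem time_optimal_hamiltonians_saturate
    {n : ℕ} (hn : 1 ≤ n) (A ρi : Matrix (Fin n) (Fin n) ℂ)
    (hA : A.IsHermitian) (hρi : IsDensity ρi) (hcomm : A * ρi = ρi * A)
    (ω : ℝ) (hω : 0 < ω)
    (hnp : ¬ IsPassive A ρi ρi)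
    (H ρ : ℝ → Matrix (Fin n) (Fin n) ℂ)
    (hHc : ContinuousOn H (Set.Icc 0 (tauPas A ρi ω)))
    (hHh : ∀ t ∈ Set.Icc (0:ℝ) (tauPas A ρi ω), (H t).IsHermitian)
    (hHb : ∀ t ∈ Set.Icc (0:ℝ) (tauPas A ρi ω), ((H t * H t).trace).re ≤ ω^2)
    (hρ0 : ρ 0 = ρi)
    (hode : ∀ t ∈ Set.Icc (0:ℝ) (tauPas A ρi ω),
      HasDerivWithinAt ρ ((-Complex.I) • (H t * ρ t - ρ t * H t))
        (Set.Icc 0 (tauPas A ρi ω)) t)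
    (hfin : IsPassive A ρi (ρ (tauPas A ρi ω))) :
    ∀ t ∈ Set.Icc (0:ℝ) (tauPas A ρi ω), ((H t * H t).trace).re = ω^2 := by
  classical
  set τ : ℝ := tauPas A ρi ω with hτdef
  set S : Set ℝ := {τ' | 0 ≤ τ' ∧ ReachesIn ρi (IsPassive A ρi) (ω^2) τ'} with hSdef
  have hτS : τ = sInf S := rfl
  have hτ0 : 0 ≤ τ := by
    rw [hτS]; exact Real.sInf_nonneg fun x hx => hx.1
  have hτpos : 0 < τ := by
    rcases hτ0.lt_or_eq with h | h
    · exact h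
    · refine absurd ?_ hnp
      have h0 : ρ τ = ρi := by rw [← h, hρ0]
      rwa [h0] at hfin
  -- the trace-square function
  set f : ℝ → ℝ := fun t => ((H t * H t).trace).re with hfdef
  have hFcont : Continuous fun M : Matrix (Fin n) (Fin n) ℂ => ((M * M).trace).re :=
    Complex.continuous_re.comp ((continuous_id.matrix_mul continuous_id).matrix_trace)
  have hfc : ContinuousOn f (Set.Icc 0 τ) := hFcont.comp_continuousOn hHc
  -- suppose not; get the bad point
  by_contra hbad
  push_neg at hbad
  obtain ⟨t₀, ht₀, hne⟩ := hbad
  have hflt : f t₀ < ω^2 := lt_of_le_of_ne (hHb t₀ ht₀) hne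
  -- the threshold
  set M' : ℝ := max ((f t₀ + ω^2)/2) (ω^2/2) with hM'def
  have hM'pos : 0 < M' := lt_of_lt_of_le (by positivity) (le_max_right _ _)
  have hM'lt : M' < ω^2 := by
    apply max_lt
    · linarith
    · nlinarith
  set c : ℝ := ω / Real.sqrt M' with hcdef
  have hsqrtpos : 0 < Real.sqrt M' := Real.sqrt_pos.2 hM'pos
  have hc1 : 1 < c := by
    rw [hcdef, lt_div_iff₀ hsqrtpos, one_mul]
    calc Real.sqrt M' < Real.sqrt (ω^2) := by
          exact Real.sqrt_lt_sqrt hM'pos.le hM'lt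
      _ = ω := by rw [Real.sqrt_sq hω.le]
  have hc2M : c^2 * M' = ω^2 := by
    rw [hcdef, div_pow, Real.sq_sqrt hM'pos.le]
    field_simp
  -- continuity gives δ
  have hcw : ContinuousWithinAt f (Set.Icc 0 τ) t₀ := hfc t₀ ht₀
  rw [Metric.continuousWithinAt_iff] at hcw
  obtain ⟨δ, hδpos, hδ⟩ := hcw ((ω^2 - f t₀)/2) (by linarith)
  have hsmall : ∀ x ∈ Set.Icc (0:ℝ) τ, |x - t₀| ≤ δ/2 → f x < M' := by
    intro x hx hxd
    have := hδ hx (by rw [Real.dist_eq]; linarith)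
    rw [Real.dist_eq] at this
    have h1 : f x < (f t₀ + ω^2)/2 := by
      have := abs_lt.1 this
      linarith [this.2]
    exact lt_of_lt_of_le h1 (le_max_left _ _)
  -- the interval [α, β]
  set α : ℝ := max (t₀ - δ/2) 0 with hαdef
  set β : ℝ := min (t₀ + δ/2) τ with hβdef
  have hα0 : 0 ≤ α := le_max_right _ _
  have hβτ : β ≤ τ := min_le_right _ _
  have hαβ : α < β := by
    apply max_lt <;> apply lt_min
    · linarith
    · linarith [ht₀.2]
    · linarith [ht₀.1]
    · exact hτpos
  have hfint : ∀ x ∈ Set.Icc α β, f x < M' := by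
    intro x hx
    refine hsmall x ⟨le_trans hα0 hx.1, le_trans hx.2 hβτ⟩ ?_
    rw [abs_le]
    constructor
    · linarith [le_trans (le_max_left (t₀ - δ/2) 0) hx.1]
    · linarith [le_trans hx.2 (min_le_left (t₀ + δ/2) τ)]
  set h : ℝ := (β - α)/3 with hhdef
  have hhpos : 0 < h := by rw [hhdef]; linarith
  set m : ℝ := α + h with hmdef
  set ε : ℝ := min (c - 1) (1/2) with hεdef
  have hεpos : 0 < ε := lt_min (by linarith) (by norm_num)
  have hεhalf : ε ≤ 1/2 := min_le_right _ _
  have hεc : 1 + ε ≤ c := by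
    have := min_le_left (c-1) (1/2); rw [← hεdef] at this; linarith
  -- the bump and speed functions
  set bump : ℝ → ℝ := fun u => max 0 (1 - |u - m|/h) with hbumpdef
  set p : ℝ → ℝ := fun u => 1 + ε * bump u with hpdef
  have hbc : Continuous bump := by
    apply continuous_const.max
    exact continuous_const.sub (((continuous_id.sub continuous_const).abs).div_const h)
  have hpc : Continuous p := continuous_const.add (continuous_const.mul hbc)
  have hbump0 : ∀ u, 0 ≤ bump u := fun u => le_max_left _ _
  have hbump1 : ∀ u, bump u ≤ 1 := by
    intro u
    apply max_le (by norm_num)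
    have : 0 ≤ |u - m|/h := div_nonneg (abs_nonneg _) hhpos.le
    linarith
  have hbumpout : ∀ u, h ≤ |u - m| → bump u = 0 := by
    intro u hu
    apply max_eq_left
    have : 1 ≤ |u - m|/h := (one_le_div hhpos).2 hu
    linarith
  have hp1 : ∀ u, 1 ≤ p u := by
    intro u
    have := mul_nonneg hεpos.le (hbump0 u)
    simp only [hpdef]; linarith
  have hpc' : ∀ u, p u ≤ c := by
    intro u
    have h1 : ε * bump u ≤ ε := by
      nth_rewrite 2 [← mul_one ε]
      exact mul_le_mul_of_nonneg_left (hbump1 u) hεpos.le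
    simp only [hpdef]; linarith
  -- the new time variable
  set φ : ℝ → ℝ := fun s => ∫ u in (0:ℝ)..s, p u with hφdef
  have hφd : ∀ s, HasDerivAt φ (p s) s := fun s => (hpc.integral_hasStrictDerivAt 0 s).hasDerivAt
  have hφcont : Continuous φ :=
    continuous_iff_continuousAt.2 fun s => (hφd s).continuousAt
  have hφmono : Monotone φ :=
    monotone_of_deriv_nonneg (fun s => (hφd s).differentiableAt)
      (fun s => by rw [(hφd s).deriv]; linarith [hp1 s])
  have hφ0 : φ 0 = 0 := intervalIntegral.integral_same
  have hbint : ∀ a b : ℝ, IntervalIntegrable bump MeasureTheory.volume a b :=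
    fun a b => hbc.intervalIntegrable a b
  have hφeq : ∀ s, φ s = s + ε * ∫ u in (0:ℝ)..s, bump u := by
    intro s
    simp only [hφdef, hpdef]
    rw [intervalIntegral.integral_add intervalIntegrable_const
      ((hbint 0 s).const_mul ε), intervalIntegral.integral_const,
      intervalIntegral.integral_const_mul]
    simp
  -- φ τ > τ
  have hmid : α + h/2 ≤ α + 3*h/2 := by linarith
  have hint_pos : 0 < ∫ u in (0:ℝ)..τ, bump u := by
    have hsplit : (∫ u in (0:ℝ)..τ, bump u) =
        (∫ u in (0:ℝ)..(α + h/2), bump u) + ((∫ u in (α + h/2)..(α + 3*h/2), bump u)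
          + ∫ u in (α + 3*h/2)..τ, bump u) := by
      rw [intervalIntegral.integral_add_adjacent_intervals (hbint _ _) (hbint _ _),
        intervalIntegral.integral_add_adjacent_intervals (hbint _ _) (hbint _ _)]
    have hβeq : α + 3*h = β := by rw [hhdef]; ring
    have h1 : 0 ≤ ∫ u in (0:ℝ)..(α + h/2), bump u :=
      intervalIntegral.integral_nonneg (by linarith) (fun u _ => hbump0 u)
    have h3 : 0 ≤ ∫ u in (α + 3*h/2)..τ, bump u :=
      intervalIntegral.integral_nonneg (by linarith [hβτ]) (fun u _ => hbump0 u)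
    have h2 : h/2 ≤ ∫ u in (α + h/2)..(α + 3*h/2), bump u := by
      have hlow : ∀ u ∈ Set.Icc (α + h/2) (α + 3*h/2), (1:ℝ)/2 ≤ bump u := by
        intro u hu
        have habs : |u - m| ≤ h/2 := by
          rw [abs_le, hmdef]
          constructor <;> [linarith [hu.1]; linarith [hu.2]]
        have : 1 - |u - m|/h ≥ 1/2 := by
          have : |u - m|/h ≤ 1/2 := by
            rw [div_le_iff₀ hhpos]; linarith
          linarith
        exact le_trans this (le_max_right _ _)
      calc h/2 = ∫ _ in (α + h/2)..(α + 3*h/2), (1:ℝ)/2 := by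
            rw [intervalIntegral.integral_const]; simp; ring
        _ ≤ ∫ u in (α + h/2)..(α + 3*h/2), bump u :=
            intervalIntegral.integral_mono_on hmid intervalIntegrable_const
              (hbint _ _) hlow
    rw [hsplit]; linarith
  have hφτ : τ < φ τ := by
    rw [hφeq τ]
    nlinarith [mul_pos hεpos hint_pos]
  -- get τ' with φ τ' = τ by IVT
  have hIVT := intermediate_value_Icc hτ0 (hφcont.continuousOn (s := Set.Icc 0 τ))
  have hτmem : τ ∈ Set.Icc (φ 0) (φ τ) := ⟨by rw [hφ0]; exact hτ0, hφτ.le⟩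
  obtain ⟨τ', hτ'mem, hφτ'⟩ := hIVT hτmem
  have hτ'lt : τ' < τ := by
    rcases lt_or_eq_of_le hτ'mem.2 with hlt | heq
    · exact hlt
    · exfalso; rw [heq] at hφτ'; rw [hφτ'] at hφτ; exact lt_irrefl _ hφτ
  have hτ'0 : 0 ≤ τ' := hτ'mem.1
  -- φ maps [0,τ'] into [0,τ]
  have hmaps : Set.MapsTo φ (Set.Icc 0 τ') (Set.Icc 0 τ) := by
    intro s hs
    constructor
    · rw [← hφ0]; exact hφmono hs.1
    · rw [← hφτ']; exact hφmono hs.2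
  -- auxiliary facts about φ
  have hφge : ∀ s, 0 ≤ s → s ≤ φ s := by
    intro s hs
    rw [hφeq s]
    have : 0 ≤ ∫ u in (0:ℝ)..s, bump u :=
      intervalIntegral.integral_nonneg hs (fun u _ => hbump0 u)
    nlinarith
  -- key bound on speed where bump is positive
  have hkey : ∀ s ∈ Set.Icc (0:ℝ) τ', (p s)^2 * f (φ s) ≤ ω^2 := by
    intro s hs
    have hφs : φ s ∈ Set.Icc (0:ℝ) τ := hmaps hs
    rcases eq_or_lt_of_le (hbump0 s) with hb0 | hbpos
    · have hps : p s = 1 := by simp only [hpdef, ← hb0]; ring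
      rw [hps]; simpa using hHb (φ s) hφs
    · -- bump s > 0, so s ∈ (m - h, m + h) = (α, α + 2h)
      have habs : |s - m| < h := by
        by_contra hcon
        push_neg at hcon
        rw [hbumpout s hcon] at hbpos
        exact lt_irrefl _ hbpos
      have hsα : α < s := by
        have := abs_lt.1 habs
        rw [hmdef] at this; linarith [this.1]
      have hs2h : s < α + 2*h := by
        have := abs_lt.1 habs
        rw [hmdef] at this; linarith [this.2]
      -- φ s ∈ [α, β]
      have hφα : α ≤ φ s := le_trans hsα.le (hφge s hs.1)
      have hφβ : φ s ≤ β := by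
        have hβeq : α + 3*h = β := by rw [hhdef]; ring
        rw [hφeq s]
        have hsplit2 : (∫ u in (0:ℝ)..s, bump u) =
            (∫ u in (0:ℝ)..α, bump u) + ∫ u in α..s, bump u :=
          (intervalIntegral.integral_add_adjacent_intervals (hbint _ _) (hbint _ _)).symm
        have hz : (∫ u in (0:ℝ)..α, bump u) = 0 := by
          have heqz : Set.EqOn bump (fun _ => (0:ℝ)) (Set.uIcc 0 α) := by
            intro u hu
            rw [Set.uIcc_of_le hα0] at hu
            apply hbumpout
            rw [abs_sub_comm, abs_of_nonneg (by rw [hmdef]; linarith [hu.2, hsα])]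
            rw [hmdef]; linarith [hu.2]
          rw [intervalIntegral.integral_congr heqz, intervalIntegral.integral_zero]
        have hub : (∫ u in α..s, bump u) ≤ s - α := by
          calc (∫ u in α..s, bump u) ≤ ∫ _ in α..s, (1:ℝ) :=
              intervalIntegral.integral_mono_on hsα.le (hbint _ _)
                intervalIntegrable_const (fun u _ => hbump1 u)
            _ = s - α := by rw [intervalIntegral.integral_const]; simp
        rw [hsplit2, hz, zero_add]
        have : ε * (∫ u in α..s, bump u) ≤ (1/2) * (s - α) := by
          apply mul_le_mul hεhalf hub
          · exact intervalIntegral.integral_nonneg hsα.le (fun u _ => hbump0 u)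
          · norm_num
        rw [← hβeq]
        nlinarith
      have hfM : f (φ s) < M' := hfint (φ s) ⟨hφα, hφβ⟩
      rcases le_or_gt (f (φ s)) 0 with hf0 | hf0
      · have : (p s)^2 * f (φ s) ≤ 0 :=
          mul_nonpos_of_nonneg_of_nonpos (sq_nonneg _) hf0
        nlinarith
      · rw [← hc2M]
        apply mul_le_mul
        · apply pow_le_pow_left₀ (by linarith [hp1 s]) (hpc' s)
        · exact hfM.le
        · exact hf0.le
        · positivity
  -- the reparametrized Hamiltonian and state
  set H' : ℝ → Matrix (Fin n) (Fin n) ℂ := fun s => (p s : ℂ) • H (φ s) with hH'def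
  set ρ' : ℝ → Matrix (Fin n) (Fin n) ℂ := fun s => ρ (φ s) with hρ'def
  -- show ReachesIn at time τ'
  have hreach : ReachesIn ρi (IsPassive A ρi) (ω^2) τ' := by
    refine ⟨H', ρ', ?_, ?_, ?_, ?_, ?_, ?_⟩
    · -- continuity
      refine ContinuousOn.smul (f := fun s => (p s : ℂ)) (g := fun s => H (φ s)) ?_ ?_
      · exact (Complex.continuous_ofReal.comp hpc).continuousOn
      · exact hHc.comp hφcont.continuousOn hmaps
    · -- Hermitian
      intro s hs
      have hherm := hHh (φ s) (hmaps hs)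
      unfold Matrix.IsHermitian at *
      rw [hH'def]
      simp only
      rw [Matrix.conjTranspose_smul, Complex.star_def, Complex.conj_ofReal, hherm]
    · -- trace bound
      intro s hs
      have : H' s * H' s = ((p s : ℂ) * (p s : ℂ)) • (H (φ s) * H (φ s)) := by
        rw [hH'def]
        simp only
        rw [Matrix.smul_mul, Matrix.mul_smul, smul_smul]
      rw [this, Matrix.trace_smul, smul_eq_mul, ← Complex.ofReal_mul,
        Complex.re_ofReal_mul]
      have := hkey s hs
      calc p s * p s * ((H (φ s) * H (φ s)).trace).re
          = (p s)^2 * f (φ s) := by rw [hfdef]; ring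
        _ ≤ ω^2 := hkey s hs
    · -- initial condition
      rw [hρ'def]; simp only; rw [hφ0, hρ0]
    · -- ODE
      intro s hs
      have hDρ := hode (φ s) (hmaps hs)
      have hDφ : HasDerivWithinAt φ (p s) (Set.Icc 0 τ') s := (hφd s).hasDerivWithinAt
      have hcomp := hDρ.scomp s hDφ hmaps
      refine hcomp.congr_deriv (Eq.symm ?_)
      -- show (-I) • (H' s * ρ' s - ρ' s * H' s) = p s • ((-I) • (...))
      rw [hH'def, hρ'def]
      simp only
      rw [Matrix.smul_mul, Matrix.mul_smul, ← smul_sub, smul_comm]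
      ext i j
      simp only [Matrix.smul_apply, Complex.real_smul, smul_eq_mul]
    · -- final condition
      rw [hρ'def]; simp only; rw [hφτ']; exact hfin
  -- contradiction with the infimum
  have hmem : τ' ∈ S := ⟨hτ'0, hreach⟩
  have hle : τ ≤ τ' := by
    rw [hτS]
    exact csInf_le ⟨0, fun x hx => hx.1⟩ hmem
  linarith

end QSLPaper
end
end

section
/- Suppose ρ_i is not passive. Let H : [0,τ_pas] → {Hermitian n×n matrices} be continuous with tr(H(t)²) ≤ ω² for all t, and let U : [0,τ_pas] → M_n(ℂ) solve U'(t) = -iH(t)U(t) with U(0) = 1 and U(τ_pas) ∈ P(ρ_i) (so H is time-optimal). Then for every τ' ≥ 0 and every continuously differentiable path γ : [0,τ'] → M_n(ℂ) with γ(t) unitary for all t, γ(0) = 1 and γ(τ') ∈ P(ρ_i), one has ∫₀^{τ'} ‖γ'(t)‖_F dt ≥ ∫₀^{τ_pas} ‖U'(t)‖_F dt, where ‖·‖_F is the Frobenius (Hilbert–Schmidt) norm; i.e., the time-evolution operator of a time-optimal Hamiltonian is a shortest curve from the identity to P(ρ_i). -/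
open Matrix Kronecker
open scoped ComplexOrder

attribute [local instance] Matrix.frobeniusSeminormedAddCommGroup
  Matrix.frobeniusNormedAddCommGroup Matrix.frobeniusNormedSpace

noncomputable section

namespace QSLPaper

/-- The Frobenius (Hilbert–Schmidt) norm of a matrix. -/
def frob {ι : Type*} [Fintype ι] (M : Matrix ι ι ℂ) : ℝ :=
  Real.sqrt (∑ i, ∑ j, ‖M i j‖ ^ 2)

section Aux
set_option maxHeartbeats 1000000
set_option linter.unusedSectionVars false

variable {ι : Type*} [Fintype ι] [DecidableEq ι]

lemma hd_mul {f g : ℝ → Matrix ι ι ℂ} {f' g' : Matrix ι ι ℂ} {s : Set ℝ} {x : ℝ}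
    (hf : HasDerivWithinAt f f' s x) (hg : HasDerivWithinAt g g' s x) :
    HasDerivWithinAt (fun t => f t * g t) (f' * g x + f x * g') s x := by
  letI : NormedRing (Matrix ι ι ℂ) := Matrix.frobeniusNormedRing
  letI : NormedAlgebra ℝ (Matrix ι ι ℂ) := Matrix.frobeniusNormedAlgebra
  exact HasDerivWithinAt.mul hf hg

lemma hd_ct {f : ℝ → Matrix ι ι ℂ} {f' : Matrix ι ι ℂ} {s : Set ℝ} {x : ℝ}
    (hf : HasDerivWithinAt f f' s x) :
    HasDerivWithinAt (fun t => (f t)ᴴ) f'ᴴ s x := hf.star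

lemma frob_eq_norm (M : Matrix ι ι ℂ) : frob M = ‖M‖ := by
  rw [frob, Matrix.frobenius_norm_def, ← Real.sqrt_eq_rpow]
  congr 1
  refine Finset.sum_congr rfl fun i _ => Finset.sum_congr rfl fun j _ => ?_
  rw [← Real.rpow_natCast (‖M i j‖) 2]
  norm_num

lemma re_trace_eq_norm_sq (M : Matrix ι ι ℂ) : ((Mᴴ * M).trace).re = ‖M‖ ^ 2 := by
  have h1 : (Mᴴ * M).trace = ∑ j, ∑ i, (starRingEnd ℂ) (M i j) * M i j := by
    simp [Matrix.trace, Matrix.diag, Matrix.mul_apply, Matrix.conjTranspose_apply]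
  rw [h1, ← frob_eq_norm, frob, Real.sq_sqrt (by positivity), Complex.re_sum]
  simp_rw [Complex.re_sum]
  rw [Finset.sum_comm]
  refine Finset.sum_congr rfl fun i _ => Finset.sum_congr rfl fun j _ => ?_
  have hz : (starRingEnd ℂ) (M i j) * M i j = ((Complex.normSq (M i j) : ℝ) : ℂ) := by
    rw [mul_comm, Complex.mul_conj]
  rw [hz]
  simp [Complex.normSq_eq_norm_sq, ← Complex.ofReal_pow]

lemma norm_mul_unitary (M V : Matrix ι ι ℂ) (hV : Vᴴ * V = 1) : ‖M * V‖ = ‖M‖ := by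
  have hVV : V * Vᴴ = 1 := mul_eq_one_comm.mp hV
  have h2 : ((M * V)ᴴ * (M * V)).trace = (Mᴴ * M).trace := by
    rw [Matrix.conjTranspose_mul]
    calc (Vᴴ * Mᴴ * (M * V)).trace = ((Vᴴ * (Mᴴ * M)) * V).trace := by
          rw [Matrix.mul_assoc, Matrix.mul_assoc, Matrix.mul_assoc]
      _ = ((V * (Vᴴ * (Mᴴ * M)))).trace := Matrix.trace_mul_comm _ _
      _ = (Mᴴ * M).trace := by rw [← Matrix.mul_assoc, hVV, Matrix.one_mul]
  have h3 := re_trace_eq_norm_sq (M * V)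
  rw [h2, re_trace_eq_norm_sq] at h3
  rw [← Real.sqrt_sq (norm_nonneg (M * V)), ← Real.sqrt_sq (norm_nonneg M), h3]

lemma const_of_zero_deriv {E : Type*} [NormedAddCommGroup E] [NormedSpace ℝ E]
    {f : ℝ → E} {a b : ℝ}
    (h : ∀ t ∈ Set.Icc a b, HasDerivWithinAt f 0 (Set.Icc a b) t) :
    ∀ t ∈ Set.Icc a b, f t = f a := by
  intro t ht
  refine constant_of_has_deriv_right_zero
    (fun x hx => (h x hx).continuousWithinAt) (fun x hx => ?_) t ht
  have h2 : HasDerivWithinAt f 0 (Set.Icc x b) x :=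
    (h x (Set.Ico_subset_Icc_self hx)).mono (Set.Icc_subset_Icc hx.1 le_rfl)
  refine h2.mono_of_mem_nhdsWithin ?_
  have hset : Set.Icc x b = Set.Ici x ∩ Set.Iic b := (Set.Ici_inter_Iic).symm
  rw [hset]
  exact Filter.inter_mem self_mem_nhdsWithin
    (mem_nhdsWithin_of_mem_nhds (Iic_mem_nhds hx.2))

lemma reaches_of_path (A ρi : Matrix ι ι ℂ) (ω δ τ' : ℝ)
    (hω : 0 < ω) (hδ : 0 < δ) (hτ' : 0 < τ')
    (γ γ' : ℝ → Matrix ι ι ℂ)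
    (hγd : ∀ t ∈ Set.Icc (0:ℝ) τ', HasDerivWithinAt γ (γ' t) (Set.Icc 0 τ') t)
    (hγ'c : ContinuousOn γ' (Set.Icc 0 τ'))
    (hγu : ∀ t ∈ Set.Icc (0:ℝ) τ', IsUnitary (γ t))
    (hγ0 : γ 0 = 1) (hγfin : γ τ' ∈ PassivizingSet A ρi) :
    ReachesIn ρi (IsPassive A ρi) (ω^2)
      (((∫ t in (0:ℝ)..τ', ‖γ' t‖) + δ * τ') / ω) := by
  letI : NormedRing (Matrix ι ι ℂ) := Matrix.frobeniusNormedRing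
  letI : NormedAlgebra ℝ (Matrix ι ι ℂ) := Matrix.frobeniusNormedAlgebra
  classical
  set proj : ℝ → ℝ := fun t => max 0 (min t τ') with hproj
  have hprojmem : ∀ t, proj t ∈ Set.Icc (0:ℝ) τ' := fun t =>
    ⟨le_max_left _ _, max_le (le_of_lt hτ') (min_le_right _ _)⟩
  have hprojid : ∀ t ∈ Set.Icc (0:ℝ) τ', proj t = t := by
    intro t ht
    simp only [hproj]
    rw [min_eq_left ht.2, max_eq_right ht.1]
  have hprojc : Continuous proj := continuous_const.max (continuous_id.min continuous_const)
  set g : ℝ → ℝ := fun t => ‖γ' (proj t)‖ + δ with hg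
  have hgc : Continuous g := by
    have : Continuous fun t => γ' (proj t) :=
      hγ'c.comp_continuous hprojc hprojmem
    exact (this.norm).add continuous_const
  have hgδ : ∀ t, δ ≤ g t := fun t => le_add_of_nonneg_left (norm_nonneg _)
  have hgpos : ∀ t, 0 < g t := fun t => lt_of_lt_of_le hδ (hgδ t)
  set s : ℝ → ℝ := fun t => ∫ u in (0:ℝ)..t, g u with hs
  have hs0 : s 0 = 0 := intervalIntegral.integral_same
  have hsd : ∀ t, HasDerivAt s (g t) t := fun t =>
    intervalIntegral.integral_hasDerivAt_right (hgc.intervalIntegrable _ _)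
      (hgc.stronglyMeasurableAtFilter _ _) hgc.continuousAt
  have hsc : Continuous s := by
    rw [continuous_iff_continuousAt]; exact fun t => (hsd t).continuousAt
  have hsmono : StrictMono s := strictMono_of_deriv_pos (fun t => by
    rw [(hsd t).deriv]; exact hgpos t)
  have hslb : ∀ t, 0 ≤ t → δ * t ≤ s t := by
    intro t ht
    have h1 : ∫ u in (0:ℝ)..t, δ ≤ s t := by
      refine intervalIntegral.integral_mono_on ht
        (intervalIntegrable_const) (hgc.intervalIntegrable _ _) (fun u _ => hgδ u)
    rwa [intervalIntegral.integral_const, smul_eq_mul, sub_zero, mul_comm] at h1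
  have hsub : ∀ t, t ≤ 0 → s t ≤ δ * t := by
    intro t ht
    have h1 : ∫ u in t..(0:ℝ), δ ≤ ∫ u in t..(0:ℝ), g u := by
      refine intervalIntegral.integral_mono_on ht
        (intervalIntegrable_const) (hgc.intervalIntegrable _ _) (fun u _ => hgδ u)
    rw [intervalIntegral.integral_const, smul_eq_mul] at h1
    have h2 : s t = -∫ u in t..(0:ℝ), g u := by
      rw [hs]; rw [← intervalIntegral.integral_symm]
    rw [h2]; nlinarith
  have hδtop : Filter.Tendsto (fun t => δ * t) Filter.atTop Filter.atTop :=
    Filter.Tendsto.const_mul_atTop hδ Filter.tendsto_id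
  have hδbot : Filter.Tendsto (fun t => δ * t) Filter.atBot Filter.atBot :=
    Filter.Tendsto.const_mul_atBot hδ Filter.tendsto_id
  have hsurj : Function.Surjective s := by
    refine hsc.surjective ?_ ?_
    · refine Filter.tendsto_atTop_mono' _ ?_ hδtop
      filter_upwards [Filter.eventually_ge_atTop (0:ℝ)] with t ht using hslb t ht
    · refine Filter.tendsto_atBot_mono' _ ?_ hδbot
      filter_upwards [Filter.eventually_le_atBot (0:ℝ)] with t ht using hsub t ht
  set E := StrictMono.orderIsoOfSurjective s hsmono hsurj with hE
  set φ : ℝ → ℝ := fun y => E.symm y with hφ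
  have hφs : ∀ t, φ (s t) = t := fun t =>
    StrictMono.orderIsoOfSurjective_symm_apply_self s hsmono hsurj t
  have hsφ : ∀ y, s (φ y) = y := fun y =>
    StrictMono.orderIsoOfSurjective_self_symm_apply s hsmono hsurj y
  have hφcont : Continuous φ := E.toHomeomorph.symm.continuous
  have hφmono : Monotone φ := fun a b hab => E.symm.monotone hab
  have hφd : ∀ y, HasDerivAt φ ((g (φ y))⁻¹) y := fun y =>
    HasDerivAt.of_local_left_inverse hφcont.continuousAt (hsd (φ y))
      (ne_of_gt (hgpos _)) (Filter.Eventually.of_forall hsφ)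
  have hφ0 : φ 0 = 0 := by have := hφs 0; rwa [hs0] at this
  -- the total time
  set T : ℝ := s τ' / ω with hT
  have hsτ'pos : 0 < s τ' := by rw [← hs0]; exact hsmono hτ'
  have hTpos : 0 < T := div_pos hsτ'pos hω
  have hωT : ω * T = s τ' := by rw [hT, mul_div_assoc']; exact mul_div_cancel_left₀ _ (ne_of_gt hω)
  -- the reparametrization
  set ψ : ℝ → ℝ := fun u => φ (ω * u) with hψ
  have hψd : ∀ u, HasDerivAt ψ ((g (ψ u))⁻¹ * ω) u := by
    intro u
    have h1 : HasDerivAt (fun u : ℝ => ω * u) ω u := by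
      simpa using (hasDerivAt_id u).const_mul ω
    exact HasDerivAt.comp u (hφd (ω * u)) h1
  have hψc : Continuous ψ := hφcont.comp (continuous_const.mul continuous_id)
  have hψmaps : Set.MapsTo ψ (Set.Icc 0 T) (Set.Icc 0 τ') := by
    intro u hu
    constructor
    · have : φ 0 ≤ φ (ω * u) := hφmono (mul_nonneg hω.le hu.1)
      rwa [hφ0] at this
    · have h1 : ω * u ≤ s τ' := by
        rw [← hωT]; exact mul_le_mul_of_nonneg_left hu.2 (le_of_lt hω)
      have := hφmono h1
      rwa [hφs] at this
  have hψ0 : ψ 0 = 0 := by simp [hψ, hφ0]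
  have hψT : ψ T = τ' := by
    rw [hψ]; simp only []
    rw [hωT, hφs]
  -- the curve and its derivative
  set Γ : ℝ → Matrix ι ι ℂ := fun u => γ (ψ u) with hΓ
  set D : ℝ → Matrix ι ι ℂ := fun u => ((g (ψ u))⁻¹ * ω) • γ' (ψ u) with hD
  have hΓd : ∀ u ∈ Set.Icc (0:ℝ) T, HasDerivWithinAt Γ (D u) (Set.Icc 0 T) u := by
    intro u hu
    exact HasDerivWithinAt.scomp u (hγd (ψ u) (hψmaps hu))
      ((hψd u).hasDerivWithinAt) hψmaps
  -- pointwise unitarity of Γ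
  have hΓu1 : ∀ u ∈ Set.Icc (0:ℝ) T, (Γ u)ᴴ * Γ u = 1 := fun u hu => hγu (ψ u) (hψmaps hu)
  have hΓu2 : ∀ u ∈ Set.Icc (0:ℝ) T, Γ u * (Γ u)ᴴ = 1 := fun u hu =>
    mul_eq_one_comm.mp (hΓu1 u hu)
  -- key anti-selfadjointness identities
  have hid1 : ∀ u ∈ Set.Icc (0:ℝ) T, D u * (Γ u)ᴴ + Γ u * (D u)ᴴ = 0 := by
    intro u hu
    have hud : UniqueDiffWithinAt ℝ (Set.Icc (0:ℝ) T) u := uniqueDiffOn_Icc hTpos u hu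
    have hd0 : HasDerivWithinAt (fun u => Γ u * (Γ u)ᴴ) 0 (Set.Icc 0 T) u :=
      (hasDerivWithinAt_const u (Set.Icc (0:ℝ) T) (1 : Matrix ι ι ℂ)).congr
        (fun x hx => hΓu2 x hx) (hΓu2 u hu)
    have hdP : HasDerivWithinAt (fun u => Γ u * (Γ u)ᴴ)
        (D u * (Γ u)ᴴ + Γ u * (D u)ᴴ) (Set.Icc 0 T) u :=
      hd_mul (hΓd u hu) (hd_ct (hΓd u hu))
    exact (hdP.derivWithin hud).symm.trans (hd0.derivWithin hud)
  have hid2 : ∀ u ∈ Set.Icc (0:ℝ) T, (D u)ᴴ * Γ u + (Γ u)ᴴ * D u = 0 := by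
    intro u hu
    have hud : UniqueDiffWithinAt ℝ (Set.Icc (0:ℝ) T) u := uniqueDiffOn_Icc hTpos u hu
    have hd0 : HasDerivWithinAt (fun u => (Γ u)ᴴ * Γ u) 0 (Set.Icc 0 T) u :=
      (hasDerivWithinAt_const u (Set.Icc (0:ℝ) T) (1 : Matrix ι ι ℂ)).congr
        (fun x hx => hΓu1 x hx) (hΓu1 u hu)
    have hdP : HasDerivWithinAt (fun u => (Γ u)ᴴ * Γ u)
        ((D u)ᴴ * Γ u + (Γ u)ᴴ * D u) (Set.Icc 0 T) u :=
      hd_mul (hd_ct (hΓd u hu)) (hΓd u hu)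
    exact (hdP.derivWithin hud).symm.trans (hd0.derivWithin hud)
  -- the Hamiltonian and the state path
  set Ham : ℝ → Matrix ι ι ℂ := fun u => Complex.I • (D u * (Γ u)ᴴ) with hHam
  set ρt : ℝ → Matrix ι ι ℂ := fun u => Γ u * ρi * (Γ u)ᴴ with hρt
  -- Hermitian
  have hherm : ∀ u ∈ Set.Icc (0:ℝ) T, (Ham u).IsHermitian := by
    intro u hu
    have h3 : Γ u * (D u)ᴴ = -(D u * (Γ u)ᴴ) := eq_neg_of_add_eq_zero_left ((add_comm (Γ u * (D u)ᴴ) (D u * (Γ u)ᴴ)).trans (hid1 u hu))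
    show (Complex.I • (D u * (Γ u)ᴴ))ᴴ = Complex.I • (D u * (Γ u)ᴴ)
    rw [Matrix.conjTranspose_smul, Matrix.conjTranspose_mul,
      Matrix.conjTranspose_conjTranspose, h3]
    simp [Complex.star_def, Complex.conj_I]
  -- continuity of Γ, D, Ham
  have hγc : ContinuousOn γ (Set.Icc 0 τ') := fun t ht => (hγd t ht).continuousWithinAt
  have hΓc : ContinuousOn Γ (Set.Icc 0 T) := hγc.comp hψc.continuousOn hψmaps
  have hDc : ContinuousOn D (Set.Icc 0 T) := by
    have hsc1 : Continuous fun u => (g (ψ u))⁻¹ * ω :=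
      ((hgc.comp hψc).inv₀ (fun u => ne_of_gt (hgpos _))).mul continuous_const
    exact ContinuousOn.smul hsc1.continuousOn (hγ'c.comp hψc.continuousOn hψmaps)
  have hHamc : ContinuousOn Ham (Set.Icc 0 T) := by
    have hΓHc : ContinuousOn (fun u => (Γ u)ᴴ) (Set.Icc 0 T) := by
      have := hΓc.star
      simpa [Matrix.star_eq_conjTranspose] using this
    exact ((hDc.mul hΓHc).const_smul Complex.I :)
  -- bandwidth
  have hband : ∀ u ∈ Set.Icc (0:ℝ) T, ((Ham u * Ham u).trace).re ≤ ω^2 := by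
    intro u hu
    have h1 : ((Ham u)ᴴ : Matrix ι ι ℂ) = Ham u := hherm u hu
    have h2 : ((Ham u * Ham u).trace).re = ‖Ham u‖^2 := by
      calc ((Ham u * Ham u).trace).re = (((Ham u)ᴴ * Ham u).trace).re := by rw [h1]
        _ = ‖Ham u‖^2 := re_trace_eq_norm_sq (Ham u)
    have h3 : ‖Ham u‖ = ‖D u‖ := by
      rw [hHam]
      simp only []
      rw [norm_smul, Complex.norm_I, one_mul]
      refine norm_mul_unitary (D u) ((Γ u)ᴴ) ?_
      rw [Matrix.conjTranspose_conjTranspose]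
      exact hΓu2 u hu
    have h4 : ‖D u‖ ≤ ω := by
      rw [hD]
      simp only []
      rw [norm_smul]
      have hg1 : g (ψ u) = ‖γ' (ψ u)‖ + δ := by
        rw [hg]; simp only []
        rw [hprojid (ψ u) (hψmaps hu)]
      have hnn : (0:ℝ) ≤ (g (ψ u))⁻¹ * ω := by positivity
      rw [Real.norm_eq_abs, abs_of_nonneg hnn, hg1]
      set a := ‖γ' (ψ u)‖ with ha
      have ha0 : 0 ≤ a := norm_nonneg _
      have : (a + δ)⁻¹ * ω * a = ω * (a / (a + δ)) := by rw [div_eq_mul_inv]; ring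
      rw [this]
      have : a / (a + δ) ≤ 1 := by
        rw [div_le_one (by linarith)]; linarith
      nlinarith
    rw [h2]
    have h5 : ‖Ham u‖ ≤ ω := by rw [h3]; exact h4
    have h6 : 0 ≤ ‖Ham u‖ := norm_nonneg _
    nlinarith
  -- initial state
  have hρ0 : ρt 0 = ρi := by
    rw [hρt]; simp only []
    rw [hΓ]; simp only []
    rw [hψ0, hγ0]
    simp
  -- the ODE
  have hODE : ∀ u ∈ Set.Icc (0:ℝ) T,
      HasDerivWithinAt ρt ((-Complex.I) • (Ham u * ρt u - ρt u * Ham u)) (Set.Icc 0 T) u := by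
    intro u hu
    have h1 : HasDerivWithinAt (fun u => Γ u * ρi) (D u * ρi) (Set.Icc 0 T) u := by
      have := hd_mul (hΓd u hu) (hasDerivWithinAt_const u (Set.Icc (0:ℝ) T) ρi)
      simpa using this
    have h2 : HasDerivWithinAt ρt (D u * ρi * (Γ u)ᴴ + Γ u * ρi * (D u)ᴴ)
        (Set.Icc 0 T) u := hd_mul h1 (hd_ct (hΓd u hu))
    have hGD : (Γ u)ᴴ * D u = -((D u)ᴴ * Γ u) := eq_neg_of_add_eq_zero_left ((add_comm ((Γ u)ᴴ * D u) ((D u)ᴴ * Γ u)).trans (hid2 u hu))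
    have m1 : Ham u * ρt u = Complex.I • (D u * ρi * (Γ u)ᴴ) := by
      rw [hHam, hρt]; simp only []
      rw [smul_mul_assoc]
      congr 1
      calc D u * (Γ u)ᴴ * (Γ u * ρi * (Γ u)ᴴ)
          = D u * (((Γ u)ᴴ * Γ u) * (ρi * (Γ u)ᴴ)) := by simp only [Matrix.mul_assoc]
        _ = D u * (ρi * (Γ u)ᴴ) := by rw [hΓu1 u hu, Matrix.one_mul]
        _ = D u * ρi * (Γ u)ᴴ := by simp only [Matrix.mul_assoc]
    have m2 : ρt u * Ham u = Complex.I • (-(Γ u * ρi * (D u)ᴴ)) := by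
      rw [hHam, hρt]; simp only []
      rw [mul_smul_comm]
      congr 1
      calc Γ u * ρi * (Γ u)ᴴ * (D u * (Γ u)ᴴ)
          = Γ u * (ρi * (((Γ u)ᴴ * D u) * (Γ u)ᴴ)) := by simp only [Matrix.mul_assoc]
        _ = Γ u * (ρi * ((-((D u)ᴴ * Γ u)) * (Γ u)ᴴ)) := by rw [hGD]
        _ = -(Γ u * (ρi * ((D u)ᴴ * (Γ u * (Γ u)ᴴ)))) := by
              simp only [Matrix.neg_mul, Matrix.mul_neg, Matrix.mul_assoc]
        _ = -(Γ u * (ρi * (D u)ᴴ)) := by rw [hΓu2 u hu, Matrix.mul_one]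
        _ = -(Γ u * ρi * (D u)ᴴ) := by simp only [Matrix.mul_assoc]
    have heq : (-Complex.I) • (Ham u * ρt u - ρt u * Ham u)
        = D u * ρi * (Γ u)ᴴ + Γ u * ρi * (D u)ᴴ := by
      rw [m1, m2, smul_neg, sub_neg_eq_add, ← smul_add, smul_smul]
      have : (-Complex.I) * Complex.I = 1 := by
        rw [neg_mul, Complex.I_mul_I, neg_neg]
      rw [this, one_smul]
    rw [heq]
    exact h2
  -- final state is passive
  have hfin : IsPassive A ρi (ρt T) := by
    have : ρt T = γ τ' * ρi * (γ τ')ᴴ := by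
      rw [hρt]; simp only []
      rw [hΓ]; simp only []
      rw [hψT]
    rw [this]
    exact hγfin.2
  -- the time identity
  have hsτ'eq : s τ' = (∫ t in (0:ℝ)..τ', ‖γ' t‖) + δ * τ' := by
    have huIcc : Set.uIcc (0:ℝ) τ' = Set.Icc 0 τ' := Set.uIcc_of_le hτ'.le
    have hcongr : s τ' = ∫ t in (0:ℝ)..τ', (‖γ' t‖ + δ) := by
      rw [hs]; simp only []
      refine intervalIntegral.integral_congr ?_
      intro t ht
      rw [huIcc] at ht
      rw [hg]; simp only []
      rw [hprojid t ht]
    have hint1 : IntervalIntegrable (fun t => ‖γ' t‖) MeasureTheory.volume 0 τ' := by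
      apply ContinuousOn.intervalIntegrable
      rw [huIcc]
      exact hγ'c.norm
    have : (∫ t in (0:ℝ)..τ', (‖γ' t‖ + δ)) =
        (∫ t in (0:ℝ)..τ', ‖γ' t‖) + ∫ t in (0:ℝ)..τ', δ := by
      exact intervalIntegral.integral_add hint1 intervalIntegrable_const
    rw [hcongr, this, intervalIntegral.integral_const, smul_eq_mul, sub_zero, mul_comm]
  have hTeq : T = ((∫ t in (0:ℝ)..τ', ‖γ' t‖) + δ * τ') / ω := by
    rw [hT, hsτ'eq]
  rw [← hTeq]
  exact ⟨Ham, ρt, hHamc, hherm, hband, hρ0, hODE, hfin⟩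

end Aux

/-- the time-evolution operator of a time-optimal Hamiltonian is a shortest
curve from the identity to `P(ρi)`. -/
theorem time_evolution_of_time_optimal_hamiltonian_is_shortest
    {n : ℕ} (hn : 1 ≤ n) (A ρi : Matrix (Fin n) (Fin n) ℂ)
    (hA : A.IsHermitian) (hρi : IsDensity ρi) (hcomm : A * ρi = ρi * A)
    (ω : ℝ) (hω : 0 < ω)
    (hnp : ¬ IsPassive A ρi ρi)
    (H U : ℝ → Matrix (Fin n) (Fin n) ℂ)
    (hHc : ContinuousOn H (Set.Icc 0 (tauPas A ρi ω)))
    (hHh : ∀ t ∈ Set.Icc (0:ℝ) (tauPas A ρi ω), (H t).IsHermitian)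
    (hHb : ∀ t ∈ Set.Icc (0:ℝ) (tauPas A ρi ω), ((H t * H t).trace).re ≤ ω^2)
    (hU0 : U 0 = 1)
    (hUode : ∀ t ∈ Set.Icc (0:ℝ) (tauPas A ρi ω),
      HasDerivWithinAt U ((-Complex.I) • (H t * U t)) (Set.Icc 0 (tauPas A ρi ω)) t)
    (hUfin : U (tauPas A ρi ω) ∈ PassivizingSet A ρi) :
    ∀ (τ' : ℝ), 0 ≤ τ' → ∀ γ γ' : ℝ → Matrix (Fin n) (Fin n) ℂ,
      (∀ t ∈ Set.Icc (0:ℝ) τ', HasDerivWithinAt γ (γ' t) (Set.Icc 0 τ') t) →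
      ContinuousOn γ' (Set.Icc 0 τ') →
      (∀ t ∈ Set.Icc (0:ℝ) τ', IsUnitary (γ t)) →
      γ 0 = 1 → γ τ' ∈ PassivizingSet A ρi →
      (∫ t in (0:ℝ)..τ', frob (γ' t)) ≥
        ∫ t in (0:ℝ)..(tauPas A ρi ω), frob ((-Complex.I) • (H t * U t)) := by
  intro τ' hτ'0 γ γ' hγd hγ'c hγu hγ0 hγfin
  set T := tauPas A ρi ω with hTdef
  have hone : (1 : Matrix (Fin n) (Fin n) ℂ) ∉ PassivizingSet A ρi := by
    intro h
    apply hnp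
    have h2 := h.2
    simpa using h2
  have hT0 : 0 ≤ T := Real.sInf_nonneg (fun x hx => hx.1)
  have hTpos : 0 < T := by
    rcases lt_or_eq_of_le hT0 with h | h
    · exact h
    · exfalso
      apply hone
      rw [← hU0]
      have : U T ∈ PassivizingSet A ρi := hUfin
      rwa [← h] at this
  have hτ'pos : 0 < τ' := by
    rcases lt_or_eq_of_le hτ'0 with h | h
    · exact h
    · exfalso
      apply hone
      rw [← hγ0]
      rwa [← h] at hγfin
  -- Part 1 : the right-hand side is at most ω * T
  have hUc : ContinuousOn U (Set.Icc 0 T) := fun t ht => (hUode t ht).continuousWithinAt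
  have hUu : ∀ t ∈ Set.Icc (0:ℝ) T, (U t)ᴴ * U t = 1 := by
    have hW : ∀ t ∈ Set.Icc (0:ℝ) T,
        HasDerivWithinAt (fun t => (U t)ᴴ * U t) 0 (Set.Icc 0 T) t := by
      intro t ht
      have hd := hUode t ht
      have h2 := hd_mul (hd_ct hd) hd
      have hzero : ((-Complex.I) • (H t * U t))ᴴ * U t
          + (U t)ᴴ * ((-Complex.I) • (H t * U t)) = 0 := by
        have hH : (H t)ᴴ = H t := hHh t ht
        rw [Matrix.conjTranspose_smul, Matrix.conjTranspose_mul, hH]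
        have hstar : star (-Complex.I) = Complex.I := by
          simp [Complex.star_def, Complex.conj_I]
        rw [hstar, smul_mul_assoc, mul_smul_comm]
        rw [Matrix.mul_assoc]
        rw [← add_smul]
        simp
      rw [hzero] at h2
      exact h2
    intro t ht
    have := const_of_zero_deriv hW t ht
    rw [this, hU0]
    simp
  have hbound : ∀ t ∈ Set.Icc (0:ℝ) T,
      frob ((-Complex.I) • (H t * U t)) ≤ ω := by
    intro t ht
    rw [frob_eq_norm, norm_smul, norm_neg, Complex.norm_I, one_mul]
    rw [norm_mul_unitary (H t) (U t) (hUu t ht)]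
    have h1 : (H t)ᴴ = H t := hHh t ht
    have h2 : ‖H t‖^2 ≤ ω^2 := by
      rw [← re_trace_eq_norm_sq, h1]
      exact hHb t ht
    nlinarith [norm_nonneg (H t)]
  have hHUc : ContinuousOn (fun t => frob ((-Complex.I) • (H t * U t))) (Set.Icc 0 T) := by
    letI : NormedRing (Matrix (Fin n) (Fin n) ℂ) := Matrix.frobeniusNormedRing
    simp only [frob_eq_norm]
    exact ((hHc.mul hUc).const_smul (-Complex.I)).norm
  have hpart1 : (∫ t in (0:ℝ)..T, frob ((-Complex.I) • (H t * U t))) ≤ ω * T := by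
    have hint : (∫ t in (0:ℝ)..T, frob ((-Complex.I) • (H t * U t)))
        ≤ ∫ _t in (0:ℝ)..T, ω := by
      refine intervalIntegral.integral_mono_on hT0 ?_ intervalIntegrable_const hbound
      exact hHUc.intervalIntegrable_of_Icc hT0
    rw [intervalIntegral.integral_const, smul_eq_mul, sub_zero, mul_comm] at hint
    exact hint
  -- Part 2 : ω * T is at most the length of γ
  have hmem : ∀ δ, 0 < δ → T ≤ ((∫ t in (0:ℝ)..τ', ‖γ' t‖) + δ * τ') / ω := by
    intro δ hδ
    have hre := reaches_of_path A ρi ω δ τ' hω hδ hτ'pos γ γ' hγd hγ'c hγu hγ0 hγfin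
    refine csInf_le ⟨0, fun x hx => hx.1⟩ ⟨?_, hre⟩
    have hL0 : 0 ≤ ∫ t in (0:ℝ)..τ', ‖γ' t‖ :=
      intervalIntegral.integral_nonneg hτ'0 (fun u _ => norm_nonneg _)
    positivity
  have hpart2 : ω * T ≤ ∫ t in (0:ℝ)..τ', ‖γ' t‖ := by
    by_contra hlt
    push_neg at hlt
    set L := ∫ t in (0:ℝ)..τ', ‖γ' t‖ with hL
    set ε := (ω * T - L) / 2 with hε
    have hεpos : 0 < ε := by simp only [hε]; linarith
    have h1 := hmem (ε / τ') (div_pos hεpos hτ'pos)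
    have h2 : ω * T ≤ L + (ε / τ') * τ' := by
      have h3 := mul_le_mul_of_nonneg_left h1 hω.le
      rwa [mul_div_cancel₀ _ (ne_of_gt hω)] at h3
    rw [div_mul_cancel₀ _ (ne_of_gt hτ'pos)] at h2
    simp only [hε] at h2
    linarith
  -- conclusion
  have hfrobL : (∫ t in (0:ℝ)..τ', frob (γ' t)) = ∫ t in (0:ℝ)..τ', ‖γ' t‖ := by
    simp only [frob_eq_norm]
  rw [ge_iff_le, hfrobL]
  calc (∫ t in (0:ℝ)..T, frob ((-Complex.I) • (H t * U t))) ≤ ω * T := hpart1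
    _ ≤ ∫ t in (0:ℝ)..τ', ‖γ' t‖ := hpart2

end QSLPaper
end
end

section
/- Let P be any unitary in P(ρ_i). Then P(ρ_i) = { U P V : U, V unitary n×n matrices with U†AU = A and Vρ_iV† = ρ_i }. -/
open Matrix Kronecker
open scoped ComplexOrder

attribute [local instance] Matrix.frobeniusSeminormedAddCommGroup
  Matrix.frobeniusNormedAddCommGroup Matrix.frobeniusNormedSpace

noncomputable section

namespace QSLPaper

/-! ### Auxiliary material for the proof of `passivizing_set_eq_double_coset` -/

attribute [local instance] Matrix.frobeniusNormedRing Matrix.frobeniusNormedAlgebra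

section DoubleCosetAux

variable {n : ℕ}

private lemma IsUnitary.mul_star' {U : Matrix (Fin n) (Fin n) ℂ} (h : IsUnitary U) :
    U * Uᴴ = 1 :=
  mul_eq_one_comm.mp h

private lemma IsUnitary.mul' {U V : Matrix (Fin n) (Fin n) ℂ} (hU : IsUnitary U)
    (hV : IsUnitary V) : IsUnitary (U * V) := by
  unfold IsUnitary at *
  rw [conjTranspose_mul, mul_assoc, ← mul_assoc Uᴴ, hU, one_mul, hV]

private lemma IsUnitary.star' {U : Matrix (Fin n) (Fin n) ℂ} (hU : IsUnitary U) :
    IsUnitary Uᴴ := by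
  unfold IsUnitary
  rw [conjTranspose_conjTranspose]
  exact hU.mul_star'

private lemma conj_conj' (X Y M : Matrix (Fin n) (Fin n) ℂ) :
    X * (Y * M * Yᴴ) * Xᴴ = (X * Y) * M * (X * Y)ᴴ := by
  simp only [conjTranspose_mul, mul_assoc]

private lemma conj_mul_conj' {u : Matrix (Fin n) (Fin n) ℂ} (hu : IsUnitary u)
    (M N : Matrix (Fin n) (Fin n) ℂ) :
    (u * M * uᴴ) * (u * N * uᴴ) = u * (M * N) * uᴴ := by
  have h : ∀ X : Matrix (Fin n) (Fin n) ℂ, uᴴ * (u * X) = X := by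
    intro X; rw [← mul_assoc, hu, one_mul]
  simp only [mul_assoc, h]

private lemma trace_conj' {u : Matrix (Fin n) (Fin n) ℂ} (hu : IsUnitary u)
    (M : Matrix (Fin n) (Fin n) ℂ) : (u * M * uᴴ).trace = M.trace := by
  rw [Matrix.trace_mul_cycle, hu, one_mul]

private lemma sandwich' {u v : Matrix (Fin n) (Fin n) ℂ} (hv : IsUnitary v)
    (S M : Matrix (Fin n) (Fin n) ℂ) :
    (u * S * vᴴ) * (v * M * vᴴ) * (u * S * vᴴ)ᴴ = u * (S * M * Sᴴ) * uᴴ := by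
  have h3 : (u * S * vᴴ)ᴴ = v * (Sᴴ * uᴴ) := by
    simp only [conjTranspose_mul, conjTranspose_conjTranspose, mul_assoc]
  have hvv : vᴴ * v = 1 := hv
  have hsimp : ∀ X : Matrix (Fin n) (Fin n) ℂ, vᴴ * (v * X) = X := fun X => by
    rw [← mul_assoc, hvv, one_mul]
  rw [h3]
  simp only [mul_assoc, hsimp]

private lemma conj_cancel' {U : Matrix (Fin n) (Fin n) ℂ} (hU : IsUnitary U)
    (M : Matrix (Fin n) (Fin n) ℂ) : Uᴴ * (U * M * Uᴴ) * U = M := by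
  calc Uᴴ * (U * M * Uᴴ) * U = (Uᴴ * U) * (M * (Uᴴ * U)) := by simp only [mul_assoc]
    _ = M := by rw [hU, one_mul, mul_one]

private lemma conj_isHermitian' {W ρ : Matrix (Fin n) (Fin n) ℂ} (hρ : ρ.IsHermitian) :
    (W * ρ * Wᴴ).IsHermitian := by
  show _ᴴ = _
  simp only [conjTranspose_mul, conjTranspose_conjTranspose, hρ.eq, mul_assoc]

/-- permutation matrix of a permutation -/
private def permMat (τ : Equiv.Perm (Fin n)) : Matrix (Fin n) (Fin n) ℂ :=
  Matrix.of fun i j => if τ j = i then 1 else 0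

private lemma permMat_unitary (τ : Equiv.Perm (Fin n)) : IsUnitary (permMat τ) := by
  ext j k
  simp only [permMat, Matrix.mul_apply, Matrix.conjTranspose_apply, Matrix.of_apply]
  rw [Finset.sum_eq_single (τ j)]
  · simp [Matrix.one_apply, eq_comm, τ.injective.eq_iff]
  · intro b _ hb
    simp [Ne.symm hb]
  · simp

private lemma permMat_conj_diag (τ : Equiv.Perm (Fin n)) (f : Fin n → ℂ) :
    permMat τ * Matrix.diagonal f * (permMat τ)ᴴ = Matrix.diagonal (f ∘ τ.symm) := by
  have h1 : permMat τ * Matrix.diagonal f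
      = Matrix.of (fun i j => if τ j = i then f j else 0) := by
    ext i j
    rw [Matrix.mul_diagonal]
    simp [permMat, ite_mul]
  rw [h1]
  ext i i'
  simp only [Matrix.mul_apply, Matrix.conjTranspose_apply, Matrix.of_apply,
    Matrix.diagonal_apply, apply_ite (star : ℂ → ℂ), star_one, star_zero]
  rw [Finset.sum_eq_single (τ.symm i)]
  · simp only [Equiv.apply_symm_apply, if_true, Function.comp_apply]
    by_cases h : i = i' <;> simp [h, permMat]
  · intro b _ hb
    have : τ b ≠ i := fun hc => hb (by rw [← hc, Equiv.symm_apply_apply])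
    simp [this]
  · simp

private lemma trace_diag_re (f g : Fin n → ℝ) :
    ((Matrix.diagonal (fun k => (f k : ℂ)) * Matrix.diagonal (fun k => (g k : ℂ))).trace).re
      = ∑ k, f k * g k := by
  rw [Matrix.diagonal_mul_diagonal, Matrix.trace_diagonal]
  have : (∑ k, ((f k : ℂ) * (g k : ℂ))) = ((∑ k, f k * g k : ℝ) : ℂ) := by push_cast; ring
  rw [this, Complex.ofReal_re]

private lemma spec_eq' {u u' : Matrix (Fin n) (Fin n) ℂ} (hu : IsUnitary u) (hu' : IsUnitary u')
    {d d' : Fin n → ℝ}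
    (h : u * Matrix.diagonal (fun k => (d k : ℂ)) * uᴴ
       = u' * Matrix.diagonal (fun k => (d' k : ℂ)) * u'ᴴ) :
    Multiset.map d Finset.univ.val = Multiset.map d' Finset.univ.val := by
  classical
  have hdet : ∀ (v : Matrix (Fin n) (Fin n) ℂ) (g : Fin n → ℝ), vᴴ * v = 1 →
      ∀ z : ℂ, (Matrix.diagonal (fun _ : Fin n => z)
          - v * Matrix.diagonal (fun k => (g k : ℂ)) * vᴴ).det = ∏ k, (z - (g k : ℂ)) := by
    intro v g hv z
    have hv' : v * vᴴ = 1 := mul_eq_one_comm.mp hv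
    have hone : Matrix.diagonal (fun _ : Fin n => z) = z • (1 : Matrix (Fin n) (Fin n) ℂ) := by
      ext i j
      by_cases hij : i = j <;> simp [Matrix.diagonal_apply, Matrix.one_apply, hij]
    have hz : v * Matrix.diagonal (fun _ : Fin n => z) * vᴴ
        = Matrix.diagonal (fun _ : Fin n => z) := by
      rw [hone, mul_smul_comm, mul_one, smul_mul_assoc, hv']
    have key : Matrix.diagonal (fun _ : Fin n => z)
        - v * Matrix.diagonal (fun k => (g k : ℂ)) * vᴴ
        = v * Matrix.diagonal (fun k => z - (g k : ℂ)) * vᴴ := by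
      have h1 : Matrix.diagonal (fun k : Fin n => z - (g k : ℂ))
          = Matrix.diagonal (fun _ : Fin n => z) - Matrix.diagonal (fun k => (g k : ℂ)) := by
        rw [Matrix.diagonal_sub]
      rw [h1, Matrix.mul_sub, Matrix.sub_mul, hz]
    rw [key, Matrix.det_mul, Matrix.det_mul]
    have h2 : vᴴ.det * v.det = 1 := by rw [← Matrix.det_mul, hv, Matrix.det_one]
    have h3 : v.det * (Matrix.diagonal (fun k : Fin n => z - (g k : ℂ))).det * vᴴ.det
        = (Matrix.diagonal (fun k : Fin n => z - (g k : ℂ))).det * (vᴴ.det * v.det) := by ring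
    rw [h3, h2, mul_one, Matrix.det_diagonal]
  have heval : ∀ z : ℂ, (∏ k, (z - (d k : ℂ))) = ∏ k, (z - (d' k : ℂ)) := by
    intro z
    rw [← hdet u d hu z, ← hdet u' d' hu' z, h]
  set s : Multiset ℂ := Multiset.map (fun k => ((d k : ℂ))) Finset.univ.val with hs
  set s' : Multiset ℂ := Multiset.map (fun k => ((d' k : ℂ))) Finset.univ.val with hs'
  have hP : (s.map (fun r => Polynomial.X - Polynomial.C r)).prod
      = (s'.map (fun r => Polynomial.X - Polynomial.C r)).prod := by
    apply Polynomial.funext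
    intro z
    rw [hs, hs', Multiset.map_map, Multiset.map_map]
    rw [show ((Multiset.map ((fun r => Polynomial.X - Polynomial.C r) ∘ fun k => ((d k : ℂ)))
        Finset.univ.val).prod) = ∏ k, (Polynomial.X - Polynomial.C ((d k : ℂ))) from
      (Finset.prod_eq_multiset_prod _ _).symm]
    rw [show ((Multiset.map ((fun r => Polynomial.X - Polynomial.C r) ∘ fun k => ((d' k : ℂ)))
        Finset.univ.val).prod) = ∏ k, (Polynomial.X - Polynomial.C ((d' k : ℂ))) from
      (Finset.prod_eq_multiset_prod _ _).symm]
    simp only [Polynomial.eval_prod, Polynomial.eval_sub, Polynomial.eval_X, Polynomial.eval_C]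
    exact heval z
  have hss : s = s' := by
    rw [← Polynomial.roots_multiset_prod_X_sub_C s, ← Polynomial.roots_multiset_prod_X_sub_C s',
      hP]
  apply Multiset.map_injective (f := (Complex.ofReal : ℝ → ℂ)) Complex.ofReal_injective
  rw [Multiset.map_map, Multiset.map_map]
  exact hss

private lemma exists_perm_pair' (a p a' p' : Fin n → ℝ)
    (ha : Multiset.map a Finset.univ.val = Multiset.map a' Finset.univ.val)
    (hp : Multiset.map p Finset.univ.val = Multiset.map p' Finset.univ.val)
    (hap : ∀ j k, a j < a k → p k ≤ p j)
    (hap' : ∀ j k, a' j < a' k → p' k ≤ p' j) :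
    ∃ τ : Equiv.Perm (Fin n), a = a' ∘ τ ∧ p = p' ∘ τ := by
  classical
  have main : ∀ (b q : Fin n → ℝ), (∀ j k, b j < b k → q k ≤ q j) →
      ∃ e : Equiv.Perm (Fin n), Monotone (b ∘ e) ∧ Antitone (q ∘ e) := by
    intro b q hbq
    set F : Fin n → ℝ ×ₗ ℝᵒᵈ := fun k => toLex (b k, OrderDual.toDual (q k)) with hF
    refine ⟨Tuple.sort F, ?_, ?_⟩
    · intro j k hjk
      have h := Tuple.monotone_sort F hjk
      rcases (Prod.Lex.le_iff).mp h with h1 | ⟨h1, _⟩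
      · exact le_of_lt h1
      · exact le_of_eq h1
    · intro j k hjk
      have h := Tuple.monotone_sort F hjk
      rcases (Prod.Lex.le_iff).mp h with h1 | ⟨h1, h2⟩
      · exact hbq _ _ h1
      · exact h2
  obtain ⟨e, hbe, hqe⟩ := main a p hap
  obtain ⟨e', hbe', hqe'⟩ := main a' p' hap'
  have hmap : ∀ (f : Fin n → ℝ) (g : Equiv.Perm (Fin n)),
      Multiset.map (f ∘ g) Finset.univ.val = Multiset.map f Finset.univ.val := by
    intro f g
    rw [← Multiset.map_map, Multiset.map_univ_val_equiv]
  have hA : a ∘ e = a' ∘ e' := by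
    apply List.ofFn_injective
    refine (fun hp h1 h2 => List.Perm.eq_of_pairwise' (r := (· ≤ · : ℝ → ℝ → Prop)) h1 h2 hp) ?_ ?_ ?_
    · rw [← Multiset.coe_eq_coe, ← Fin.univ_val_map, ← Fin.univ_val_map, hmap, hmap]
      exact ha
    · exact hbe.sortedLE_ofFn.pairwise
    · exact hbe'.sortedLE_ofFn.pairwise
  have hPp : p ∘ e = p' ∘ e' := by
    have h1 : Monotone (OrderDual.toDual ∘ (p ∘ e)) := hqe.dual_right
    have h1' : Monotone (OrderDual.toDual ∘ (p' ∘ e')) := hqe'.dual_right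
    have h2 : (OrderDual.toDual ∘ (p ∘ e)) = (OrderDual.toDual ∘ (p' ∘ e')) := by
      apply List.ofFn_injective
      refine (fun hp h1 h2 => List.Perm.eq_of_pairwise' (r := (· ≤ · : ℝᵒᵈ → ℝᵒᵈ → Prop)) h1 h2 hp) ?_ ?_ ?_
      · rw [← Multiset.coe_eq_coe, ← Fin.univ_val_map, ← Fin.univ_val_map]
        show Multiset.map (OrderDual.toDual ∘ p ∘ e) Finset.univ.val
          = Multiset.map (OrderDual.toDual ∘ p' ∘ e') Finset.univ.val
        rw [show OrderDual.toDual ∘ p ∘ e = (OrderDual.toDual ∘ p) ∘ e from rfl,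
          ← Multiset.map_map (OrderDual.toDual ∘ p) (⇑e), Multiset.map_univ_val_equiv,
          show OrderDual.toDual ∘ p' ∘ e' = (OrderDual.toDual ∘ p') ∘ e' from rfl,
          ← Multiset.map_map (OrderDual.toDual ∘ p') (⇑e'), Multiset.map_univ_val_equiv,
          ← Multiset.map_map, ← Multiset.map_map, hp]
      · exact h1.sortedLE_ofFn.pairwise
      · exact h1'.sortedLE_ofFn.pairwise
    funext k
    exact OrderDual.toDual.injective (congrFun h2 k)
  refine ⟨e.symm.trans e', funext fun k => ?_, funext fun k => ?_⟩
  · have := congrFun hA (e.symm k)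
    simpa [Equiv.apply_symm_apply] using this
  · have := congrFun hPp (e.symm k)
    simpa [Equiv.apply_symm_apply] using this

open Module.End in
private lemma joint_spectral' (A B : Matrix (Fin n) (Fin n) ℂ)
    (hA : A.IsHermitian) (hB : B.IsHermitian) (hAB : A * B = B * A) :
    ∃ (u : Matrix (Fin n) (Fin n) ℂ) (a b : Fin n → ℝ), IsUnitary u ∧
      A = u * Matrix.diagonal (fun k => (a k : ℂ)) * uᴴ ∧
      B = u * Matrix.diagonal (fun k => (b k : ℂ)) * uᴴ := by
  classical
  have hTA : (Matrix.toEuclideanLin A).IsSymmetric := Matrix.isHermitian_iff_isSymmetric.mp hA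
  have hTB : (Matrix.toEuclideanLin B).IsSymmetric := Matrix.isHermitian_iff_isSymmetric.mp hB
  have hmul : ∀ M N : Matrix (Fin n) (Fin n) ℂ,
      Matrix.toEuclideanLin (M * N) = (Matrix.toEuclideanLin M) ∘ₗ (Matrix.toEuclideanLin N) := by
    intro M N
    apply LinearMap.ext
    intro v
    simp only [LinearMap.comp_apply, Matrix.toEuclideanLin_apply, Equiv.apply_symm_apply,
      Matrix.mulVec_mulVec]
  have hcomm : Commute (Matrix.toEuclideanLin A) (Matrix.toEuclideanLin B) := by
    show _ * _ = _ * _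
    rw [Module.End.mul_eq_comp, Module.End.mul_eq_comp, ← hmul, ← hmul, hAB]
  set V : ℂ × ℂ → Submodule ℂ (EuclideanSpace ℂ (Fin n)) :=
    fun i => eigenspace (Matrix.toEuclideanLin A) i.2 ⊓ eigenspace (Matrix.toEuclideanLin B) i.1
    with hVdef
  have hInt : DirectSum.IsInternal V := hTA.directSum_isInternal_of_commute hTB hcomm
  have hInt' : DirectSum.IsInternal (fun i : {i : ℂ × ℂ // V i ≠ ⊥} => V i) :=
    DirectSum.isInternal_ne_bot_iff.mpr hInt
  have hfin : {i : ℂ × ℂ | V i ≠ ⊥}.Finite :=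
    WellFoundedGT.finite_ne_bot_of_iSupIndep hInt.submodule_iSupIndep
  haveI : Fintype {i : ℂ × ℂ // V i ≠ ⊥} := hfin.fintype
  have hOrth := OrthogonalFamily.comp
    (hV := hTA.orthogonalFamily_eigenspace_inf_eigenspace hTB)
    (f := (Subtype.val : {i : ℂ × ℂ // V i ≠ ⊥} → ℂ × ℂ)) Subtype.val_injective
  have hn : Module.finrank ℂ (EuclideanSpace ℂ (Fin n)) = n := finrank_euclideanSpace_fin
  set e : OrthonormalBasis (Fin n) ℂ (EuclideanSpace ℂ (Fin n)) :=
    hInt'.subordinateOrthonormalBasis hn hOrth with hedef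
  set idx : Fin n → {i : ℂ × ℂ // V i ≠ ⊥} :=
    fun k => hInt'.subordinateOrthonormalBasisIndex hn k hOrth with hidxdef
  have hsub : ∀ k, e k ∈ V (idx k) := fun k =>
    hInt'.subordinateOrthonormalBasis_subordinate hn k hOrth
  have hAe : ∀ k, Matrix.toEuclideanLin A (e k) = ((idx k).1.2 : ℂ) • e k := fun k =>
    mem_eigenspace_iff.mp (hsub k).1
  have hBe : ∀ k, Matrix.toEuclideanLin B (e k) = ((idx k).1.1 : ℂ) • e k := fun k =>
    mem_eigenspace_iff.mp (hsub k).2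
  have hek : ∀ k, e k ≠ 0 := fun k => by
    simpa using e.toBasis.ne_zero k
  have hrealA : ∀ k, (((((idx k).1.2)).re : ℂ)) = (idx k).1.2 := by
    intro k
    have hev : HasEigenvalue (Matrix.toEuclideanLin A) ((idx k).1.2) :=
      hasEigenvalue_of_hasEigenvector ⟨(hsub k).1, hek k⟩
    exact Complex.conj_eq_iff_re.mp (hTA.conj_eigenvalue_eq_self hev)
  have hrealB : ∀ k, (((((idx k).1.1)).re : ℂ)) = (idx k).1.1 := by
    intro k
    have hev : HasEigenvalue (Matrix.toEuclideanLin B) ((idx k).1.1) :=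
      hasEigenvalue_of_hasEigenvector ⟨(hsub k).2, hek k⟩
    exact Complex.conj_eq_iff_re.mp (hTB.conj_eigenvalue_eq_self hev)
  set a : Fin n → ℝ := fun k => ((idx k).1.2).re with hadef
  set b : Fin n → ℝ := fun k => ((idx k).1.1).re with hbdef
  set evec : Fin n → (Fin n → ℂ) := fun j => WithLp.equiv 2 (Fin n → ℂ) (e j) with hevecdef
  have hAv : ∀ j, A *ᵥ evec j = (a j : ℂ) • evec j := by
    intro j
    have h1 := congrArg (WithLp.equiv 2 (Fin n → ℂ)) (hAe j)
    change A *ᵥ evec j = ((idx j).1.2 : ℂ) • evec j at h1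
    rw [h1, hadef, hrealA]
  have hBv : ∀ j, B *ᵥ evec j = (b j : ℂ) • evec j := by
    intro j
    have h1 := congrArg (WithLp.equiv 2 (Fin n → ℂ)) (hBe j)
    change B *ᵥ evec j = ((idx j).1.1 : ℂ) • evec j at h1
    rw [h1, hbdef, hrealB]
  have hinner : ∀ j k, (∑ i, star (evec j i) * evec k i) = if j = k then (1:ℂ) else 0 := by
    intro j k
    have h0 := orthonormal_iff_ite.mp e.orthonormal j k
    simpa [PiLp.inner_apply, RCLike.inner_apply, hevecdef, mul_comm] using h0
  set u : Matrix (Fin n) (Fin n) ℂ := Matrix.of (fun i j => evec j i) with hudef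
  have hu : IsUnitary u := by
    show uᴴ * u = 1
    ext j k
    rw [Matrix.mul_apply, Matrix.one_apply]
    simp only [Matrix.conjTranspose_apply, hudef, Matrix.of_apply]
    exact hinner j k
  have hu' : u * uᴴ = 1 := mul_eq_one_comm.mp hu
  have key : ∀ (M : Matrix (Fin n) (Fin n) ℂ) (d : Fin n → ℝ),
      (∀ j, M *ᵥ evec j = (d j : ℂ) • evec j) →
      M = u * Matrix.diagonal (fun k => (d k : ℂ)) * uᴴ := by
    intro M d hM
    have hMu : M * u = u * Matrix.diagonal (fun k => (d k : ℂ)) := by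
      ext i j
      rw [Matrix.mul_apply, Matrix.mul_diagonal]
      have h1 : (∑ l, M i l * u l j) = (M *ᵥ evec j) i := rfl
      rw [h1, hM j]
      simp only [Pi.smul_apply, smul_eq_mul, hudef, Matrix.of_apply]
      ring
    calc M = M * (u * uᴴ) := by rw [hu', mul_one]
    _ = (M * u) * uᴴ := by rw [mul_assoc]
    _ = u * Matrix.diagonal (fun k => (d k : ℂ)) * uᴴ := by rw [hMu]
  exact ⟨u, a, b, hu, key A a hAv, key B b hBv⟩

open NormedSpace in
private lemma passive_commute' {A ρi W : Matrix (Fin n) (Fin n) ℂ}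
    (hA : A.IsHermitian) (hρ : ρi.IsHermitian) (hW : IsUnitary W)
    (hpass : IsPassive A ρi (W * ρi * Wᴴ)) :
    A * (W * ρi * Wᴴ) = (W * ρi * Wᴴ) * A := by
  classical
  set σ := W * ρi * Wᴴ with hσdef
  have hσH : σᴴ = σ := by
    rw [hσdef]
    simp only [conjTranspose_mul, conjTranspose_conjTranspose, hρ.eq, mul_assoc]
  set C := σ * A - A * σ with hCdef
  suffices hC0 : C = 0 by
    exact (sub_eq_zero.mp hC0).symm
  have hCst : Cᴴ = -C := by
    rw [hCdef, conjTranspose_sub, conjTranspose_mul σ A, conjTranspose_mul A σ, hσH, hA.eq,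
      neg_sub]
  have hCst' : C = -Cᴴ := by rw [hCst, neg_neg]
  haveI : FiniteDimensional ℝ (Matrix (Fin n) (Fin n) ℂ) :=
    Module.Finite.trans ℂ (Matrix (Fin n) (Fin n) ℂ)
  haveI : CompleteSpace (Matrix (Fin n) (Fin n) ℂ) := FiniteDimensional.complete ℝ _
  set g : ℝ → Matrix (Fin n) (Fin n) ℂ := fun t => exp (t • C) with hgdef
  have hsmulH : ∀ t : ℝ, (t • C)ᴴ = t • Cᴴ := by
    intro t
    rw [Matrix.conjTranspose_smul, star_trivial]
  have hgsH : ∀ t, (g t)ᴴ = exp (t • Cᴴ) := by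
    intro t
    rw [hgdef]
    simp only
    rw [← Matrix.exp_conjTranspose, hsmulH]
  have hg0val : g 0 = 1 := by
    rw [hgdef]
    simp only [zero_smul]
    exact exp_zero
  have hgu : ∀ t, IsUnitary (g t) := by
    intro t
    show (g t)ᴴ * g t = 1
    rw [hgsH]
    have h1 : t • Cᴴ = -(t • C) := by rw [hCst, smul_neg]
    rw [h1]
    have h2 := Matrix.exp_add_of_commute (-(t • C)) (t • C)
      (Commute.neg_left (Commute.refl _))
    rw [hgdef]
    simp only
    rw [← h2, neg_add_cancel]
    exact exp_zero
  set F : ℝ → Matrix (Fin n) (Fin n) ℂ := fun t => (g t * σ) * ((g t)ᴴ * A) with hFdef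
  set L : Matrix (Fin n) (Fin n) ℂ →ₗ[ℝ] ℝ :=
    Complex.reLm ∘ₗ ((Matrix.traceLinearMap (Fin n) ℂ ℂ).restrictScalars ℝ) with hLdef
  have hLapp : ∀ M : Matrix (Fin n) (Fin n) ℂ, L M = (M.trace).re := fun _ => rfl
  set f : ℝ → ℝ := fun t => L (F t) with hfdef
  have hmin : ∀ t, f 0 ≤ f t := by
    intro t
    have hVu : IsUnitary (g t * W) := (hgu t).mul' hW
    have hconj : (g t * W) * ρi * (g t * W)ᴴ = g t * σ * (g t)ᴴ := by
      rw [hσdef]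
      simp only [conjTranspose_mul, mul_assoc]
    have h1 := hpass (g t * W) hVu
    rw [hconj] at h1
    have hf0 : f 0 = ((σ * A).trace).re := by
      rw [hfdef]
      simp only [hFdef, hg0val, one_mul, conjTranspose_one]
      rw [hLapp]
    have hft : f t = ((g t * σ * (g t)ᴴ * A).trace).re := by
      rw [hfdef]
      simp only [hFdef]
      rw [hLapp, mul_assoc (g t * σ)]
    rw [hf0, hft]
    exact h1
  have hg0 : HasDerivAt g C 0 := by
    have h := hasDerivAt_exp_smul_const (𝕂 := ℝ) C 0
    simp only [zero_smul, exp_zero, one_mul] at h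
    exact h
  have hgs0 : HasDerivAt (fun t => (g t)ᴴ) (-C) 0 := by
    have h := hasDerivAt_exp_smul_const (𝕂 := ℝ) Cᴴ 0
    have hfun : (fun t : ℝ => exp (t • Cᴴ)) = fun t => (g t)ᴴ := by
      funext t
      rw [hgsH]
    rw [← hfun, ← hCst]
    simp only [zero_smul, exp_zero, one_mul] at h
    exact h
  have hF' : HasDerivAt F ((C * σ) * ((g 0)ᴴ * A) + (g 0 * σ) * (-C * A)) 0 :=
    (hg0.mul_const σ).mul (hgs0.mul_const A)
  set D := (C * σ) * ((g 0)ᴴ * A) + (g 0 * σ) * (-C * A) with hDdef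
  have hf' : HasDerivAt f (L D) 0 := by
    have hclm := (LinearMap.toContinuousLinearMap L).hasFDerivAt (x := F 0)
    exact hclm.comp_hasDerivAt 0 hF'
  have hmin0 : IsLocalMin f 0 := Filter.Eventually.of_forall hmin
  have hL0 : L D = 0 := hmin0.hasDerivAt_eq_zero hf'
  have hDsimp : D = C * σ * A - σ * (C * A) := by
    rw [hDdef, hg0val]
    simp only [conjTranspose_one, one_mul, neg_mul, mul_neg]
    rw [← sub_eq_add_neg]
  have htrD : D.trace = (C * C).trace := by
    rw [hDsimp, Matrix.trace_sub, Matrix.trace_mul_comm σ (C * A), mul_assoc C σ A,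
      ← Matrix.trace_sub, mul_assoc C A σ, ← Matrix.mul_sub, ← hCdef]
  have hLD : L D = ((C * C).trace).re := by rw [hLapp, htrD]
  have hCC : (C * C).trace = -(C * Cᴴ).trace := by
    nth_rewrite 2 [hCst']
    rw [mul_neg, Matrix.trace_neg]
  have htr : (C * Cᴴ).trace = ((∑ i, ∑ j, Complex.normSq (C i j) : ℝ) : ℂ) := by
    push_cast
    simp [Matrix.trace, Matrix.diag, Matrix.mul_apply, Matrix.conjTranspose_apply,
      Complex.mul_conj]
  have hS : ∑ i, ∑ j, Complex.normSq (C i j) = 0 := by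
    have h1 : (0:ℝ) = -(∑ i, ∑ j, Complex.normSq (C i j)) := by
      rw [← hL0, hLD, hCC, htr]
      simp
    linarith
  ext i j
  rw [Matrix.zero_apply]
  have hij : Complex.normSq (C i j) = 0 := by
    have h1 : ∀ i ∈ Finset.univ, (0:ℝ) ≤ ∑ j, Complex.normSq (C i j) := fun i _ =>
      Finset.sum_nonneg fun j _ => Complex.normSq_nonneg _
    have h2 := (Finset.sum_eq_zero_iff_of_nonneg h1).mp hS i (Finset.mem_univ i)
    have h3 := (Finset.sum_eq_zero_iff_of_nonneg
      (fun j _ => Complex.normSq_nonneg (C i j))).mp h2 j (Finset.mem_univ j)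
    exact h3
  exact Complex.normSq_eq_zero.mp hij

private lemma passive_antitone' {A ρi W u : Matrix (Fin n) (Fin n) ℂ} {a p : Fin n → ℝ}
    (hW : IsUnitary W) (hpass : IsPassive A ρi (W * ρi * Wᴴ)) (hu : IsUnitary u)
    (hArep : A = u * Matrix.diagonal (fun k => (a k : ℂ)) * uᴴ)
    (hσrep : W * ρi * Wᴴ = u * Matrix.diagonal (fun k => (p k : ℂ)) * uᴴ) :
    ∀ j k, a j < a k → p k ≤ p j := by
  intro j k hjk
  set τ := Equiv.swap j k with hτdef
  have h1 := hpass (u * permMat τ * uᴴ * W)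
    (((hu.mul' (permMat_unitary τ)).mul' hu.star').mul' hW)
  have hL : ((W * ρi * Wᴴ * A).trace).re = ∑ i, p i * a i := by
    rw [hσrep, hArep, conj_mul_conj' hu, trace_conj' hu]
    exact trace_diag_re p a
  have hconj : (u * permMat τ * uᴴ * W) * ρi * (u * permMat τ * uᴴ * W)ᴴ
      = u * (Matrix.diagonal ((fun i => (p i : ℂ)) ∘ τ.symm)) * uᴴ := by
    have h2 : (u * permMat τ * uᴴ * W) * ρi * (u * permMat τ * uᴴ * W)ᴴ
        = (u * permMat τ * uᴴ) * (W * ρi * Wᴴ) * (u * permMat τ * uᴴ)ᴴ := by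
      simp only [conjTranspose_mul, conjTranspose_conjTranspose, mul_assoc]
    rw [h2, hσrep, sandwich' hu, permMat_conj_diag]
  have hR : (((u * permMat τ * uᴴ * W) * ρi * (u * permMat τ * uᴴ * W)ᴴ * A).trace).re
      = ∑ i, p (τ.symm i) * a i := by
    rw [hconj, hArep, conj_mul_conj' hu, trace_conj' hu]
    exact trace_diag_re (fun i => p (τ.symm i)) a
  rw [hL, hR] at h1
  have hjk' : j ≠ k := by
    intro h
    rw [h] at hjk
    exact lt_irrefl _ hjk
  have hvanish : ∀ i ∈ Finset.univ, i ∉ ({j, k} : Finset (Fin n)) →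
      p i * a i - p (τ.symm i) * a i = 0 := by
    intro i _ hi
    simp only [Finset.mem_insert, Finset.mem_singleton] at hi
    push_neg at hi
    rw [hτdef, Equiv.symm_swap, Equiv.swap_apply_of_ne_of_ne hi.1 hi.2]
    ring
  have hsplit : ∑ i, (p i * a i - p (τ.symm i) * a i)
      = (p j * a j - p (τ.symm j) * a j) + (p k * a k - p (τ.symm k) * a k) := by
    rw [← Finset.sum_subset (Finset.subset_univ ({j, k} : Finset (Fin n))) hvanish,
      Finset.sum_pair hjk']
  have hsum : (p j * a j - p (τ.symm j) * a j) + (p k * a k - p (τ.symm k) * a k) ≤ 0 := by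
    rw [← hsplit, Finset.sum_sub_distrib]
    linarith
  rw [hτdef, Equiv.symm_swap, Equiv.swap_apply_left, Equiv.swap_apply_right] at hsum
  by_contra hcon
  push_neg at hcon
  nlinarith [mul_pos (sub_pos.mpr hcon) (sub_pos.mpr hjk)]

end DoubleCosetAux

/-- `P(ρi) = { U P V : U, V unitary, U†AU = A, VρiV† = ρi }` for any
`P ∈ P(ρi)`. -/
theorem passivizing_set_eq_double_coset
    {n : ℕ} (hn : 1 ≤ n) (A ρi : Matrix (Fin n) (Fin n) ℂ)
    (hA : A.IsHermitian) (hρi : IsDensity ρi) (hcomm : A * ρi = ρi * A)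
    (P : Matrix (Fin n) (Fin n) ℂ) (hP : P ∈ PassivizingSet A ρi) :
    PassivizingSet A ρi =
      {W | ∃ U V : Matrix (Fin n) (Fin n) ℂ,
        IsUnitary U ∧ IsUnitary V ∧ Uᴴ * A * U = A ∧ V * ρi * Vᴴ = ρi ∧ W = U * P * V} := by
  classical
  obtain ⟨hPu, hPpass⟩ := hP
  have hρH : ρi.IsHermitian := hρi.1.1
  ext W
  simp only [PassivizingSet, Set.mem_setOf_eq]
  constructor
  · rintro ⟨hWu, hWpass⟩
    have hcW : A * (W * ρi * Wᴴ) = (W * ρi * Wᴴ) * A := passive_commute' hA hρH hWu hWpass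
    have hcP : A * (P * ρi * Pᴴ) = (P * ρi * Pᴴ) * A := passive_commute' hA hρH hPu hPpass
    obtain ⟨u, a, p, hu, hArep, hσWrep⟩ :=
      joint_spectral' A (W * ρi * Wᴴ) hA (conj_isHermitian' hρH) hcW
    obtain ⟨v, c, q, hv, hArep', hσPrep⟩ :=
      joint_spectral' A (P * ρi * Pᴴ) hA (conj_isHermitian' hρH) hcP
    have hanti : ∀ j k, a j < a k → p k ≤ p j := passive_antitone' hWu hWpass hu hArep hσWrep
    have hanti' : ∀ j k, c j < c k → q k ≤ q j := passive_antitone' hPu hPpass hv hArep' hσPrep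
    have hamult : Multiset.map c Finset.univ.val = Multiset.map a Finset.univ.val :=
      spec_eq' hv hu (by rw [← hArep', ← hArep])
    have hWPu : IsUnitary (W * Pᴴ) := hWu.mul' hPu.star'
    have hPcancel : Pᴴ * (P * ρi * Pᴴ) * Pᴴᴴ = ρi := by
      rw [conjTranspose_conjTranspose]
      have h0 : ∀ X : Matrix (Fin n) (Fin n) ℂ, Pᴴ * (P * X) = X := fun X => by
        rw [← mul_assoc, hPu, one_mul]
      have h1 : Pᴴ * (P * ρi * Pᴴ) * P = Pᴴ * (P * (ρi * (Pᴴ * P))) := by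
        simp only [mul_assoc]
      rw [h1, h0, hPu, mul_one]
    have hconj0 : (W * Pᴴ) * (P * ρi * Pᴴ) * (W * Pᴴ)ᴴ = W * ρi * Wᴴ := by
      rw [← conj_conj', hPcancel]
    have hpmult : Multiset.map q Finset.univ.val = Multiset.map p Finset.univ.val := by
      apply spec_eq' (hWPu.mul' hv) hu
      calc ((W * Pᴴ) * v) * Matrix.diagonal (fun k => (q k : ℂ)) * ((W * Pᴴ) * v)ᴴ
          = (W * Pᴴ) * (v * Matrix.diagonal (fun k => (q k : ℂ)) * vᴴ) * (W * Pᴴ)ᴴ :=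
            (conj_conj' _ _ _).symm
        _ = (W * Pᴴ) * (P * ρi * Pᴴ) * (W * Pᴴ)ᴴ := by rw [← hσPrep]
        _ = W * ρi * Wᴴ := hconj0
        _ = u * Matrix.diagonal (fun k => (p k : ℂ)) * uᴴ := hσWrep
    obtain ⟨τ, hcτ, hqτ⟩ := exists_perm_pair' c q a p hamult hpmult hanti' hanti
    have hqτ' : (fun i => (q i : ℂ)) ∘ τ.symm = fun i => (p i : ℂ) := by
      funext i
      simp [hqτ, Equiv.apply_symm_apply]
    have hcτ' : (fun i => (c i : ℂ)) ∘ τ.symm = fun i => (a i : ℂ) := by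
      funext i
      simp [hcτ, Equiv.apply_symm_apply]
    have hUu : IsUnitary (u * permMat τ * vᴴ) := (hu.mul' (permMat_unitary τ)).mul' hv.star'
    have hUσ : (u * permMat τ * vᴴ) * (P * ρi * Pᴴ) * (u * permMat τ * vᴴ)ᴴ = W * ρi * Wᴴ := by
      rw [hσPrep, sandwich' hv, permMat_conj_diag, hqτ', hσWrep]
    have hUA : (u * permMat τ * vᴴ) * A * (u * permMat τ * vᴴ)ᴴ = A := by
      nth_rewrite 1 [hArep']
      rw [sandwich' hv, permMat_conj_diag, hcτ', ← hArep]
    refine ⟨u * permMat τ * vᴴ, Pᴴ * (u * permMat τ * vᴴ)ᴴ * W, hUu,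
      (hPu.star'.mul' hUu.star').mul' hWu, ?_, ?_, ?_⟩
    · have h1 := congrArg (fun X => (u * permMat τ * vᴴ)ᴴ * X * (u * permMat τ * vᴴ)) hUA
      rw [conj_cancel' hUu] at h1
      exact h1.symm
    · have h7 : (u * permMat τ * vᴴ)ᴴ * (W * ρi * Wᴴ) * (u * permMat τ * vᴴ) = P * ρi * Pᴴ := by
        rw [← hUσ, conj_cancel' hUu]
      have h6 : (Pᴴ * (u * permMat τ * vᴴ)ᴴ * W) * ρi * (Pᴴ * (u * permMat τ * vᴴ)ᴴ * W)ᴴ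
          = Pᴴ * ((u * permMat τ * vᴴ)ᴴ * (W * ρi * Wᴴ) * (u * permMat τ * vᴴ)) * Pᴴᴴ := by
        simp only [conjTranspose_mul, conjTranspose_conjTranspose, mul_assoc]
      rw [h6, h7, hPcancel]
    · have h8 : (u * permMat τ * vᴴ) * P * (Pᴴ * (u * permMat τ * vᴴ)ᴴ * W)
          = ((u * permMat τ * vᴴ) * (P * Pᴴ) * (u * permMat τ * vᴴ)ᴴ) * W := by
        simp only [mul_assoc]
      rw [h8, hPu.mul_star', mul_one, hUu.mul_star', one_mul]
  · rintro ⟨U, V, hU, hV, hUA, hVρ, rfl⟩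
    have hconj : (U * P * V) * ρi * (U * P * V)ᴴ = U * (P * ρi * Pᴴ) * Uᴴ := by
      have h1 : (U * P * V) * ρi * (U * P * V)ᴴ = U * (P * (V * ρi * Vᴴ) * Pᴴ) * Uᴴ := by
        simp only [conjTranspose_mul, mul_assoc]
      rw [h1, hVρ]
    refine ⟨(hU.mul' hPu).mul' hV, ?_⟩
    intro V₀ hV₀
    have hL : (((U * P * V) * ρi * (U * P * V)ᴴ * A).trace).re
        = (((P * ρi * Pᴴ) * A).trace).re := by
      rw [hconj]
      have h2 : (U * (P * ρi * Pᴴ) * Uᴴ * A).trace = ((P * ρi * Pᴴ) * (Uᴴ * A * U)).trace := by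
        rw [Matrix.trace_mul_cycle (U * (P * ρi * Pᴴ)) Uᴴ A,
          Matrix.trace_mul_cycle A (U * (P * ρi * Pᴴ)) Uᴴ]
        rw [show Uᴴ * A * (U * (P * ρi * Pᴴ)) = (Uᴴ * A * U) * (P * ρi * Pᴴ) from by
          simp only [mul_assoc], Matrix.trace_mul_comm]
      rw [h2, hUA]
    rw [hL]
    exact hPpass V₀ hV₀


end QSLPaper
end
end

section
/- Suppose ρ_i is not passive, and let H be an n×n Hermitian matrix with tr(H²) = ω² such that exp(-iτ_pas·H)·ρ_i·exp(iτ_pas·H) is passive (i.e., H is a time-independent time-optimal Hamiltonian). Then H is parallel transporting and completely incompatible with A: for every eigenvalue a of A, the orthogonal projection Π_a onto the eigenspace ker(A − a) satisfies Π_a H Π_a = 0, and for every eigenvalue p of ρ_i, the orthogonal projection Π_p onto ker(ρ_i − p) satisfies Π_p H Π_p = 0. -/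
open Matrix Kronecker
open scoped ComplexOrder

attribute [local instance] Matrix.frobeniusSeminormedAddCommGroup
  Matrix.frobeniusNormedAddCommGroup Matrix.frobeniusNormedSpace

noncomputable section

namespace QSLPaper

section Aux

attribute [local instance] Matrix.frobeniusNormedRing Matrix.frobeniusNormedAlgebra

variable {n : ℕ}

/-- One-parameter group generated by `M`. -/
def eAt (M : Matrix (Fin n) (Fin n) ℂ) (t : ℝ) : Matrix (Fin n) (Fin n) ℂ :=
  NormedSpace.exp (t • M)

lemma eAt_deriv (M : Matrix (Fin n) (Fin n) ℂ) (t : ℝ) :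
    HasDerivAt (eAt M) (eAt M t * M) t := by
  have h := hasDerivAt_exp_smul_const (𝕂 := ℝ) M t
  exact h

lemma eAt_continuous (M : Matrix (Fin n) (Fin n) ℂ) : Continuous (eAt M) :=
  continuous_iff_continuousAt.2 fun t => (eAt_deriv M t).continuousAt

lemma eAt_zero (M : Matrix (Fin n) (Fin n) ℂ) : eAt M 0 = 1 := by
  simp [eAt, NormedSpace.exp_zero]

lemma eAt_mul_neg (M : Matrix (Fin n) (Fin n) ℂ) (t : ℝ) :
    eAt M t * eAt (-M) t = 1 := by
  rw [eAt, eAt, ← Matrix.exp_add_of_commute]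
  · rw [smul_neg, add_neg_cancel, NormedSpace.exp_zero]
  · exact ((Commute.refl M).neg_right.smul_left t).smul_right t

lemma eAt_neg_mul (M : Matrix (Fin n) (Fin n) ℂ) (t : ℝ) :
    eAt (-M) t * eAt M t = 1 := by
  have := eAt_mul_neg (-M) t
  rwa [neg_neg] at this

lemma eAt_conjTranspose (M : Matrix (Fin n) (Fin n) ℂ) (t : ℝ) :
    (eAt M t)ᴴ = eAt Mᴴ t := by
  rw [eAt, eAt, ← Matrix.exp_conjTranspose]
  congr 1
  ext i j
  simp [Matrix.conjTranspose_apply]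

lemma eAt_commute {X M : Matrix (Fin n) (Fin n) ℂ} (h : Commute X M) (t : ℝ) :
    Commute X (eAt M t) :=
  (h.smul_right t).exp_right

lemma trace_sq_eq (F : Matrix (Fin n) (Fin n) ℂ) (hF : F.IsHermitian) :
    (F * F).trace = ((∑ i, ∑ j, Complex.normSq (F i j) : ℝ) : ℂ) := by
  rw [Matrix.trace]
  push_cast
  simp only [Matrix.diag_apply, Matrix.mul_apply]
  refine Finset.sum_congr rfl fun i _ => Finset.sum_congr rfl fun j _ => ?_
  rw [show F j i = (starRingEnd ℂ) (F i j) from (hF.apply j i).symm, Complex.mul_conj]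

lemma trace_sq_nonneg (F : Matrix (Fin n) (Fin n) ℂ) (hF : F.IsHermitian) :
    0 ≤ ((F * F).trace).re := by
  rw [trace_sq_eq F hF, Complex.ofReal_re]
  exact Finset.sum_nonneg fun i _ => Finset.sum_nonneg fun j _ => Complex.normSq_nonneg _

lemma trace_sq_pos (F : Matrix (Fin n) (Fin n) ℂ) (hF : F.IsHermitian) (h0 : F ≠ 0) :
    0 < ((F * F).trace).re := by
  rw [trace_sq_eq F hF, Complex.ofReal_re]
  obtain ⟨i, j, hij⟩ : ∃ i j, F i j ≠ 0 := by
    by_contra h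
    push_neg at h
    exact h0 (by ext i j; simpa using h i j)
  have : 0 < Complex.normSq (F i j) := Complex.normSq_pos.2 hij
  calc (0:ℝ) < ∑ j', Complex.normSq (F i j') :=
        Finset.sum_pos' (fun k _ => Complex.normSq_nonneg _) ⟨j, Finset.mem_univ j, this⟩
    _ ≤ ∑ i', ∑ j', Complex.normSq (F i' j') :=
        Finset.single_le_sum (f := fun i' => ∑ j', Complex.normSq (F i' j'))
          (fun k _ => Finset.sum_nonneg fun l _ => Complex.normSq_nonneg _) (Finset.mem_univ i)

lemma trace_sq_eq_zero (F : Matrix (Fin n) (Fin n) ℂ) (hF : F.IsHermitian)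
    (h : ((F * F).trace).re = 0) : F = 0 := by
  by_contra h0
  exact absurd h (ne_of_gt (trace_sq_pos F hF h0))

lemma passive_of_trace_eq (A ρi ρ₁ ρ₂ : Matrix (Fin n) (Fin n) ℂ)
    (h : (ρ₁ * A).trace = (ρ₂ * A).trace) (hp : IsPassive A ρi ρ₁) :
    IsPassive A ρi ρ₂ := fun V hV => by
  rw [← h]; exact hp V hV


lemma core (A ρi : Matrix (Fin n) (Fin n) ℂ) (ω : ℝ) (hω : 0 < ω)
    (hnp : ¬ IsPassive A ρi ρi) (δ : ℝ) (hδ : 0 < δ)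
    (G σ : ℝ → Matrix (Fin n) (Fin n) ℂ)
    (hGh : ∀ t, (G t).IsHermitian)
    (hGn : ∀ t, ((G t * G t).trace).re = ω ^ 2 - δ)
    (hGc : Continuous G)
    (hσ0 : σ 0 = ρi)
    (hσ' : ∀ t, HasDerivAt σ ((-Complex.I) • (G t * σ t - σ t * G t)) t)
    (hfin : IsPassive A ρi (σ (tauPas A ρi ω))) : False := by
  set τ := tauPas A ρi ω with hτdef
  have hτ0 : 0 ≤ τ := Real.sInf_nonneg fun x hx => hx.1
  have hτne : τ ≠ 0 := by
    intro h
    rw [h, hσ0] at hfin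
    exact hnp hfin
  have hτpos : 0 < τ := lt_of_le_of_ne hτ0 (Ne.symm hτne)
  have hωδ : 0 ≤ ω ^ 2 - δ := by rw [← hGn 0]; exact trace_sq_nonneg _ (hGh 0)
  rcases eq_or_lt_of_le hωδ with heq | hlt
  · -- degenerate case : G vanishes, σ is constant
    have hG0 : ∀ t, G t = 0 := fun t =>
      trace_sq_eq_zero _ (hGh t) (by rw [hGn t, ← heq])
    have hd : ∀ t, HasDerivAt σ 0 t := by
      intro t
      have h := hσ' t
      have h0 : (-Complex.I) • ((0 : Matrix (Fin n) (Fin n) ℂ) * σ t - σ t * 0) = 0 := by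
        simp
      rw [hG0 t, h0] at h
      exact h
    have hconst : σ τ = σ 0 :=
      is_const_of_deriv_eq_zero (fun t => (hd t).differentiableAt)
        (fun t => (hd t).deriv) τ 0
    rw [hconst, hσ0] at hfin
    exact hnp hfin
  · set r := Real.sqrt (ω ^ 2 - δ) with hrdef
    have hrpos : 0 < r := Real.sqrt_pos.2 hlt
    have hr2 : r ^ 2 = ω ^ 2 - δ := Real.sq_sqrt hωδ
    have hrω : r < ω := by nlinarith
    set c := ω / r with hcdef
    have hcpos : 0 < c := div_pos hω hrpos
    set τ' := τ * r / ω with hτ'def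
    have hcτ' : c * τ' = τ := by
      rw [hcdef, hτ'def]
      field_simp
    have hτ'τ : τ' < τ := by
      rw [hτ'def, div_lt_iff₀ hω]
      exact mul_lt_mul_of_pos_left hrω hτpos
    have hτ'0 : 0 ≤ τ' := by positivity
    have hmem : τ' ∈ {τ | 0 ≤ τ ∧ ReachesIn ρi (IsPassive A ρi) (ω ^ 2) τ} := by
      refine ⟨hτ'0, fun s => c • G (c * s), fun s => σ (c * s), ?_, ?_, ?_, ?_, ?_, ?_⟩
      · exact ((hGc.comp (continuous_const.mul continuous_id)).const_smul c).continuousOn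
      · intro t _
        show (c • G (c * t))ᴴ = c • G (c * t)
        have hh : (G (c * t))ᴴ = G (c * t) := hGh (c * t)
        rw [Matrix.conjTranspose_smul, hh, star_trivial]
      · intro t _
        have hmul : (c • G (c * t)) * (c • G (c * t)) = (c * c) • (G (c * t) * G (c * t)) := by
          rw [smul_mul_assoc, mul_smul_comm, smul_smul]
        rw [hmul, Matrix.trace_smul]
        have hre : ((c * c) • (G (c * t) * G (c * t)).trace).re
            = (c * c) * ((G (c * t) * G (c * t)).trace).re := by
          simp [Complex.smul_re]
        rw [hre, hGn]
        have : c * c * (ω ^ 2 - δ) = ω ^ 2 := by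
          rw [← hr2, hcdef]
          field_simp
        linarith
      · simpa [mul_zero] using hσ0
      · intro t _
        have h1 : HasDerivAt (fun s => σ (c * s))
            (c • ((-Complex.I) • (G (c * t) * σ (c * t) - σ (c * t) * G (c * t)))) t := by
          have hlin : HasDerivAt (fun s : ℝ => c * s) c t := by
            simpa using (hasDerivAt_id t).const_mul c
          exact HasDerivAt.scomp t (hσ' (c * t)) hlin
        have h2 : c • ((-Complex.I) • (G (c * t) * σ (c * t) - σ (c * t) * G (c * t)))
            = (-Complex.I) • ((c • G (c * t)) * σ (c * t) - σ (c * t) * (c • G (c * t))) := by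
          rw [smul_comm, smul_sub, smul_mul_assoc, mul_smul_comm]
        rw [h2] at h1
        exact h1.hasDerivWithinAt
      · show IsPassive A ρi (σ (c * τ'))
        rw [hcτ']
        exact hfin
    have hle : τ ≤ τ' := by
      rw [hτdef, tauPas]
      exact csInf_le ⟨0, fun x hx => hx.1⟩ hmem
    linarith


lemma caseRho (A ρi : Matrix (Fin n) (Fin n) ℂ) (ω : ℝ) (hω : 0 < ω)
    (hnp : ¬ IsPassive A ρi ρi)
    (H : Matrix (Fin n) (Fin n) ℂ) (hH : H.IsHermitian)
    (hband : ((H * H).trace).re = ω ^ 2)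
    (hopt : IsPassive A ρi
      (NormedSpace.exp ((-(Complex.I) * ((tauPas A ρi ω : ℝ) : ℂ)) • H) * ρi *
        NormedSpace.exp ((Complex.I * ((tauPas A ρi ω : ℝ) : ℂ)) • H)))
    (D : Matrix (Fin n) (Fin n) ℂ) (hDh : D.IsHermitian) (hD0 : D ≠ 0)
    (htHD : (H * D).trace = (D * D).trace) (htDH : (D * H).trace = (D * D).trace)
    (hDρ : D * ρi = ρi * D) : False := by
  set τ := tauPas A ρi ω with hτdef
  set M : Matrix (Fin n) (Fin n) ℂ := (-Complex.I) • H with hMdef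
  set E : Matrix (Fin n) (Fin n) ℂ := H - D with hEdef
  set W : ℝ → Matrix (Fin n) (Fin n) ℂ := eAt M with hWdef
  set V : ℝ → Matrix (Fin n) (Fin n) ℂ := eAt (-M) with hVdef
  have hHM : Commute H M := (Commute.refl H).smul_right _
  have hHW : ∀ t, H * W t = W t * H := fun t => (eAt_commute hHM t).eq
  have hHV : ∀ t, H * V t = V t * H := fun t => (eAt_commute hHM.neg_right t).eq
  have hVW : ∀ t, V t * W t = 1 := fun t => eAt_neg_mul M t
  have hWV : ∀ t, W t * V t = 1 := fun t => eAt_mul_neg M t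
  have cancelVW : ∀ (t : ℝ) (X : Matrix (Fin n) (Fin n) ℂ), V t * (W t * X) = X :=
    fun t X => by rw [← mul_assoc, hVW, one_mul]
  set G : ℝ → Matrix (Fin n) (Fin n) ℂ := fun t => W t * E * V t with hGdef
  set σ : ℝ → Matrix (Fin n) (Fin n) ℂ := fun t => W t * ρi * V t with hσdef
  have hEh : Eᴴ = E := by rw [hEdef, Matrix.conjTranspose_sub, hH, hDh]
  have hMct : Mᴴ = -M := by
    rw [hMdef, Matrix.conjTranspose_smul, hH]
    simp [Complex.conj_I]
  have hWct : ∀ t, (W t)ᴴ = V t := fun t => by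
    rw [hWdef, eAt_conjTranspose, hMct, hVdef]
  have hVct : ∀ t, (V t)ᴴ = W t := fun t => by
    rw [hVdef, eAt_conjTranspose, Matrix.conjTranspose_neg, hMct, neg_neg, hWdef]
  have hGh : ∀ t, (G t).IsHermitian := by
    intro t
    show (W t * E * V t)ᴴ = W t * E * V t
    rw [Matrix.conjTranspose_mul, Matrix.conjTranspose_mul, hVct, hWct, hEh]
    simp only [mul_assoc]
  set δ : ℝ := ((D * D).trace).re with hδdef
  have hδ : 0 < δ := trace_sq_pos D hDh hD0
  have hE2 : (E * E).trace = (H * H).trace - (D * D).trace := by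
    have hexp : E * E = H * H - H * D - D * H + D * D := by
      rw [hEdef]; noncomm_ring
    rw [hexp, Matrix.trace_add, Matrix.trace_sub, Matrix.trace_sub, htHD, htDH]
    ring
  have hE2re : ((E * E).trace).re = ω ^ 2 - δ := by
    rw [hE2, Complex.sub_re, hband, hδdef]
  have hGG : ∀ t, (G t * G t).trace = (E * E).trace := by
    intro t
    have h1 : G t * G t = W t * (E * (E * V t)) := by
      simp only [hGdef, mul_assoc, cancelVW]
    rw [h1, Matrix.trace_mul_comm]
    simp only [mul_assoc, hVW, mul_one]
  have hGn : ∀ t, ((G t * G t).trace).re = ω ^ 2 - δ := fun t => by rw [hGG t, hE2re]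
  have hGc : Continuous G :=
    ((eAt_continuous M).mul continuous_const).mul (eAt_continuous (-M))
  have hσ0 : σ 0 = ρi := by
    simp only [hσdef, hWdef, hVdef, eAt_zero, one_mul, mul_one]
  have hσ' : ∀ t, HasDerivAt σ ((-Complex.I) • (G t * σ t - σ t * G t)) t := by
    intro t
    have hWd := eAt_deriv M t
    have hVd := eAt_deriv (-M) t
    have h1 := (hWd.mul_const ρi).mul hVd
    rw [← hWdef, ← hVdef] at h1
    have hMneg : -M = Complex.I • H := by
      rw [hMdef, neg_smul, neg_neg]
    have hGσ : G t * σ t = W t * (E * (ρi * V t)) := by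
      simp only [hGdef, hσdef, mul_assoc, cancelVW]
    have hσG : σ t * G t = W t * (ρi * (E * V t)) := by
      simp only [hGdef, hσdef, mul_assoc, cancelVW]
    have e1 : W t * M * ρi * V t
        = (-Complex.I) • (W t * (H * (ρi * V t))) := by
      rw [hMdef]
      simp only [mul_smul_comm, smul_mul_assoc, mul_assoc]
    have e2 : W t * ρi * (V t * -M)
        = Complex.I • (W t * (ρi * (H * V t))) := by
      rw [hMneg, mul_smul_comm, ← hHV t, mul_smul_comm]
      simp only [mul_assoc]
    have e3 : G t * σ t - σ t * G t
        = W t * (H * (ρi * V t)) - W t * (ρi * (H * V t)) := by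
      rw [hGσ, hσG]
      have hD1 : D * (ρi * V t) = ρi * (D * V t) := by
        rw [← mul_assoc, hDρ, mul_assoc]
      rw [hEdef]
      simp only [sub_mul, mul_sub]
      rw [hD1]
      abel
    have key : W t * M * ρi * V t + W t * ρi * (V t * -M)
        = (-Complex.I) • (G t * σ t - σ t * G t) := by
      rw [e1, e2, e3, smul_sub]
      simp only [neg_smul]
      abel
    rw [key] at h1
    exact h1
  have hWτ : W τ = NormedSpace.exp ((-(Complex.I) * ((τ : ℝ) : ℂ)) • H) := by
    rw [hWdef]
    show NormedSpace.exp ((τ : ℝ) • M) = _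
    congr 1
    rw [hMdef, ← smul_assoc]
    congr 1
    rw [Complex.real_smul]
    ring
  have hVτ : V τ = NormedSpace.exp ((Complex.I * ((τ : ℝ) : ℂ)) • H) := by
    rw [hVdef]
    show NormedSpace.exp ((τ : ℝ) • (-M)) = _
    congr 1
    rw [hMdef, neg_smul, neg_neg, ← smul_assoc]
    congr 1
    rw [Complex.real_smul]
    ring
  have hfin : IsPassive A ρi (σ τ) := by
    have : σ τ = NormedSpace.exp ((-(Complex.I) * ((τ : ℝ) : ℂ)) • H) * ρi *
        NormedSpace.exp ((Complex.I * ((τ : ℝ) : ℂ)) • H) := by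
      show W τ * ρi * V τ = _
      rw [hWτ, hVτ]
    rw [this]
    exact hopt
  exact core A ρi ω hω hnp δ hδ G σ hGh hGn hGc hσ0 hσ' hfin



lemma caseA (A ρi : Matrix (Fin n) (Fin n) ℂ) (ω : ℝ) (hω : 0 < ω)
    (hnp : ¬ IsPassive A ρi ρi)
    (H : Matrix (Fin n) (Fin n) ℂ) (hH : H.IsHermitian)
    (hband : ((H * H).trace).re = ω ^ 2)
    (hopt : IsPassive A ρi
      (NormedSpace.exp ((-(Complex.I) * ((tauPas A ρi ω : ℝ) : ℂ)) • H) * ρi *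
        NormedSpace.exp ((Complex.I * ((tauPas A ρi ω : ℝ) : ℂ)) • H)))
    (D : Matrix (Fin n) (Fin n) ℂ) (hDh : D.IsHermitian) (hD0 : D ≠ 0)
    (htHD : (H * D).trace = (D * D).trace) (htDH : (D * H).trace = (D * D).trace)
    (hDA : A * D = D * A) : False := by
  set τ := tauPas A ρi ω with hτdef
  set M : Matrix (Fin n) (Fin n) ℂ := (-Complex.I) • H with hMdef
  set B : Matrix (Fin n) (Fin n) ℂ := Complex.I • D with hBdef
  set E : Matrix (Fin n) (Fin n) ℂ := H - D with hEdef
  set W : ℝ → Matrix (Fin n) (Fin n) ℂ := eAt M with hWdef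
  set V : ℝ → Matrix (Fin n) (Fin n) ℂ := eAt (-M) with hVdef
  set Y : ℝ → Matrix (Fin n) (Fin n) ℂ := eAt B with hYdef
  set Z : ℝ → Matrix (Fin n) (Fin n) ℂ := eAt (-B) with hZdef
  have hHM : Commute H M := (Commute.refl H).smul_right _
  have hHW : ∀ t, H * W t = W t * H := fun t => (eAt_commute hHM t).eq
  have hHV : ∀ t, H * V t = V t * H := fun t => (eAt_commute hHM.neg_right t).eq
  have hVW : ∀ t, V t * W t = 1 := fun t => eAt_neg_mul M t
  have hZY : ∀ t, Z t * Y t = 1 := fun t => eAt_neg_mul B t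
  have hBZ : ∀ t, B * Z t = Z t * B :=
    fun t => (eAt_commute (Commute.refl B).neg_right t).eq
  have hAB : Commute A B := by
    show A * B = B * A
    rw [hBdef, mul_smul_comm, smul_mul_assoc, hDA]
  have cancelZY : ∀ (t : ℝ) (X : Matrix (Fin n) (Fin n) ℂ), Z t * (Y t * X) = X :=
    fun t X => by rw [← mul_assoc, hZY, one_mul]
  set F : ℝ → Matrix (Fin n) (Fin n) ℂ := fun t => W t * ρi * V t with hFdef
  set G : ℝ → Matrix (Fin n) (Fin n) ℂ := fun t => Y t * E * Z t with hGdef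
  set σ : ℝ → Matrix (Fin n) (Fin n) ℂ := fun t => Y t * F t * Z t with hσdef
  have hEh : Eᴴ = E := by rw [hEdef, Matrix.conjTranspose_sub, hH, hDh]
  have hBct : Bᴴ = -B := by
    rw [hBdef, Matrix.conjTranspose_smul, hDh]
    simp [Complex.conj_I, neg_smul]
  have hYct : ∀ t, (Y t)ᴴ = Z t := fun t => by
    rw [hYdef, eAt_conjTranspose, hBct, hZdef]
  have hZct : ∀ t, (Z t)ᴴ = Y t := fun t => by
    rw [hZdef, eAt_conjTranspose, Matrix.conjTranspose_neg, hBct, neg_neg, hYdef]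
  have hGh : ∀ t, (G t).IsHermitian := by
    intro t
    show (Y t * E * Z t)ᴴ = Y t * E * Z t
    rw [Matrix.conjTranspose_mul, Matrix.conjTranspose_mul, hZct, hYct, hEh]
    simp only [mul_assoc]
  set δ : ℝ := ((D * D).trace).re with hδdef
  have hδ : 0 < δ := trace_sq_pos D hDh hD0
  have hE2 : (E * E).trace = (H * H).trace - (D * D).trace := by
    have hexp : E * E = H * H - H * D - D * H + D * D := by
      rw [hEdef]; noncomm_ring
    rw [hexp, Matrix.trace_add, Matrix.trace_sub, Matrix.trace_sub, htHD, htDH]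
    ring
  have hE2re : ((E * E).trace).re = ω ^ 2 - δ := by
    rw [hE2, Complex.sub_re, hband, hδdef]
  have hGG : ∀ t, (G t * G t).trace = (E * E).trace := by
    intro t
    have h1 : G t * G t = Y t * (E * (E * Z t)) := by
      simp only [hGdef, mul_assoc, cancelZY]
    rw [h1, Matrix.trace_mul_comm]
    simp only [mul_assoc, hZY, mul_one]
  have hGn : ∀ t, ((G t * G t).trace).re = ω ^ 2 - δ := fun t => by rw [hGG t, hE2re]
  have hGc : Continuous G :=
    ((eAt_continuous B).mul continuous_const).mul (eAt_continuous (-B))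
  have hσ0 : σ 0 = ρi := by
    simp only [hσdef, hFdef, hWdef, hVdef, hYdef, hZdef, eAt_zero, one_mul, mul_one]
  have hσ' : ∀ t, HasDerivAt σ ((-Complex.I) • (G t * σ t - σ t * G t)) t := by
    intro t
    have hWd := eAt_deriv M t
    have hVd := eAt_deriv (-M) t
    have hYd := eAt_deriv B t
    have hZd := eAt_deriv (-B) t
    have h1 := (hWd.mul_const ρi).mul hVd
    rw [← hWdef, ← hVdef] at h1
    have hMneg : -M = Complex.I • H := by
      rw [hMdef, neg_smul, neg_neg]
    have e1 : W t * M * ρi * V t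
        = (-Complex.I) • (W t * (H * (ρi * V t))) := by
      rw [hMdef]
      simp only [mul_smul_comm, smul_mul_assoc, mul_assoc]
    have e2 : W t * ρi * (V t * -M)
        = Complex.I • (W t * (ρi * (H * V t))) := by
      rw [hMneg, mul_smul_comm, ← hHV t, mul_smul_comm]
      simp only [mul_assoc]
    have w1 : W t * (H * (ρi * V t)) = H * (W t * (ρi * V t)) := by
      rw [← mul_assoc, ← hHW t, mul_assoc]
    have w2 : W t * (ρi * (H * V t)) = W t * (ρi * V t) * H := by
      rw [hHV t]
      simp only [mul_assoc]
    have hFkey : W t * M * ρi * V t + W t * ρi * (V t * -M)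
        = (-Complex.I) • (H * F t - F t * H) := by
      rw [e1, e2, w1, w2, smul_sub]
      simp only [hFdef, neg_smul, mul_assoc]
      abel
    rw [hFkey] at h1
    have h2 := (hYd.mul h1).mul hZd
    rw [← hYdef, ← hZdef] at h2
    have hGσ : G t * σ t = Y t * (E * (F t * Z t)) := by
      simp only [hGdef, hσdef, mul_assoc, cancelZY]
    have hσG : σ t * G t = Y t * (F t * (E * Z t)) := by
      simp only [hGdef, hσdef, mul_assoc, cancelZY]
    have T1 : Y t * B * F t * Z t = Complex.I • (Y t * (D * (F t * Z t))) := by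
      rw [hBdef]
      simp only [mul_smul_comm, smul_mul_assoc, mul_assoc]
    have T2 : Y t * ((-Complex.I) • (H * F t - F t * H)) * Z t
        = (-Complex.I) • (Y t * (H * (F t * Z t)))
          - (-Complex.I) • (Y t * (F t * (H * Z t))) := by
      simp only [mul_smul_comm, smul_mul_assoc, mul_sub, sub_mul, smul_sub, mul_assoc]
    have T3 : Y t * F t * (Z t * -B) = (-Complex.I) • (Y t * (F t * (D * Z t))) := by
      have hz : Z t * -B = (-Complex.I) • (D * Z t) := by
        rw [mul_neg, ← hBZ t, hBdef]
        simp only [neg_smul, smul_mul_assoc]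
      rw [hz]
      simp only [mul_smul_comm, mul_assoc]
    have e3 : E * (F t * Z t) = H * (F t * Z t) - D * (F t * Z t) := by
      rw [hEdef, sub_mul]
    have e4 : E * Z t = H * Z t - D * Z t := by
      rw [hEdef, sub_mul]
    have key2 : (Y t * B * F t + Y t * ((-Complex.I) • (H * F t - F t * H))) * Z t
          + Y t * F t * (Z t * -B)
        = (-Complex.I) • (G t * σ t - σ t * G t) := by
      rw [add_mul, T2, T3, hGσ, hσG, e3, e4]
      rw [show Y t * B * F t * Z t = Complex.I • (Y t * (D * (F t * Z t))) from T1]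
      simp only [mul_sub, smul_sub, neg_smul]
      abel
    rw [← key2]
    exact h2
  have hWτ : W τ = NormedSpace.exp ((-(Complex.I) * ((τ : ℝ) : ℂ)) • H) := by
    rw [hWdef]
    show NormedSpace.exp ((τ : ℝ) • M) = _
    congr 1
    rw [hMdef, ← smul_assoc]
    congr 1
    rw [Complex.real_smul]
    ring
  have hVτ : V τ = NormedSpace.exp ((Complex.I * ((τ : ℝ) : ℂ)) • H) := by
    rw [hVdef]
    show NormedSpace.exp ((τ : ℝ) • (-M)) = _
    congr 1
    rw [hMdef, neg_smul, neg_neg, ← smul_assoc]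
    congr 1
    rw [Complex.real_smul]
    ring
  have hoptF : IsPassive A ρi (F τ) := by
    have : F τ = NormedSpace.exp ((-(Complex.I) * ((τ : ℝ) : ℂ)) • H) * ρi *
        NormedSpace.exp ((Complex.I * ((τ : ℝ) : ℂ)) • H) := by
      show W τ * ρi * V τ = _
      rw [hWτ, hVτ]
    rw [this]
    exact hopt
  have hfin : IsPassive A ρi (σ τ) := by
    have hAZc : A * Z τ = Z τ * A := (eAt_commute hAB.neg_right τ).eq
    have htr : (F τ * A).trace = (σ τ * A).trace := by
      have s1 : σ τ * A = Y τ * (F τ * (A * Z τ)) := by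
        show (Y τ * F τ * Z τ) * A = _
        simp only [mul_assoc]
        rw [← hAZc]
      rw [s1, Matrix.trace_mul_comm (Y τ) (F τ * (A * Z τ))]
      simp only [mul_assoc, hZY, mul_one]
    exact passive_of_trace_eq A ρi (F τ) (σ τ) htr hoptF
  exact core A ρi ω hω hnp δ hδ G σ hGh hGn hGc hσ0 hσ' hfin


lemma proj_eq (B : Matrix (Fin n) (Fin n) ℂ) (hB : B.IsHermitian) (c : ℝ)
    (P : Matrix (Fin n) (Fin n) ℂ) (hP : P.IsHermitian) (hPP : P * P = P)
    (hfix : ∀ v, P.mulVec v = v ↔ B.mulVec v = (c : ℂ) • v) :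
    B * P = (c : ℂ) • P ∧ P * B = (c : ℂ) • P := by
  have key : ∀ v, (B * P).mulVec v = ((c : ℂ) • P).mulVec v := by
    intro v
    have hfixv : P.mulVec (P.mulVec v) = P.mulVec v := by
      rw [Matrix.mulVec_mulVec, hPP]
    have h2 := (hfix (P.mulVec v)).1 hfixv
    rw [← Matrix.mulVec_mulVec, h2, Matrix.smul_mulVec]
  have h1 : B * P = (c : ℂ) • P := by
    ext i j
    have := congrFun (key (Pi.single j 1)) i
    simpa using this
  refine ⟨h1, ?_⟩
  have h2 := congrArg Matrix.conjTranspose h1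
  rw [Matrix.conjTranspose_mul, hB, hP, Matrix.conjTranspose_smul, hP] at h2
  rw [h2]
  congr 1
  simp [Complex.conj_ofReal]

lemma trace_PHP (H P : Matrix (Fin n) (Fin n) ℂ) (hPP : P * P = P) :
    (H * (P * H * P)).trace = ((P * H * P) * (P * H * P)).trace := by
  have hPc : ∀ X : Matrix (Fin n) (Fin n) ℂ, P * (P * X) = P * X := fun X => by
    rw [← mul_assoc, hPP]
  have h1 : (P * H * P) * (P * H * P) = P * (H * (P * (H * P))) := by
    simp only [mul_assoc, hPc]
  rw [h1, Matrix.trace_mul_comm P (H * (P * (H * P)))]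
  simp only [mul_assoc, hPP, mul_one]

end Aux

open NormedSpace in
/-- a time-independent time-optimal Hamiltonian is parallel transporting and
completely incompatible with `A`: compressing it by the orthogonal projection onto any
eigenspace of `A`, or of `ρi`, gives zero. -/
theorem time_optimal_hamiltonian_parallel_and_incompatible
    {n : ℕ} (hn : 1 ≤ n) (A ρi : Matrix (Fin n) (Fin n) ℂ)
    (hA : A.IsHermitian) (hρi : IsDensity ρi) (hcomm : A * ρi = ρi * A)
    (ω : ℝ) (hω : 0 < ω)
    (hnp : ¬ IsPassive A ρi ρi)
    (H : Matrix (Fin n) (Fin n) ℂ) (hH : H.IsHermitian)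
    (hband : ((H * H).trace).re = ω^2)
    (hopt : IsPassive A ρi
      (NormedSpace.exp ((-(Complex.I) * ((tauPas A ρi ω : ℝ) : ℂ)) • H) * ρi *
        NormedSpace.exp ((Complex.I * ((tauPas A ρi ω : ℝ) : ℂ)) • H))) :
    (∀ c : ℝ, (∃ v, v ≠ 0 ∧ A.mulVec v = (c : ℂ) • v) →
      ∀ P : Matrix (Fin n) (Fin n) ℂ, P.IsHermitian → P * P = P →
        (∀ v, P.mulVec v = v ↔ A.mulVec v = (c : ℂ) • v) → P * H * P = 0) ∧
    (∀ c : ℝ, (∃ v, v ≠ 0 ∧ ρi.mulVec v = (c : ℂ) • v) →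
      ∀ P : Matrix (Fin n) (Fin n) ℂ, P.IsHermitian → P * P = P →
        (∀ v, P.mulVec v = v ↔ ρi.mulVec v = (c : ℂ) • v) → P * H * P = 0) := by
  constructor
  · -- eigenprojections of A
    intro c _ P hPh hPP hfix
    by_contra hD0
    obtain ⟨hBP, hPB⟩ := proj_eq A hA c P hPh hPP hfix
    have hDh : (P * H * P).IsHermitian := by
      show (P * H * P)ᴴ = P * H * P
      rw [Matrix.conjTranspose_mul, Matrix.conjTranspose_mul, hPh, hH]
      simp only [mul_assoc]
    have htHD : (H * (P * H * P)).trace = ((P * H * P) * (P * H * P)).trace :=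
      trace_PHP H P hPP
    have htDH : ((P * H * P) * H).trace = ((P * H * P) * (P * H * P)).trace := by
      rw [Matrix.trace_mul_comm]; exact htHD
    have h5 : A * (P * H * P) = (c : ℂ) • (P * H * P) := by
      calc A * (P * H * P) = A * P * H * P := by simp only [mul_assoc]
        _ = ((c : ℂ) • P) * H * P := by rw [hBP]
        _ = (c : ℂ) • (P * H * P) := by simp only [smul_mul_assoc]
    have h6 : (P * H * P) * A = (c : ℂ) • (P * H * P) := by
      calc (P * H * P) * A = P * H * (P * A) := by simp only [mul_assoc]
        _ = P * H * ((c : ℂ) • P) := by rw [hPB]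
        _ = (c : ℂ) • (P * H * P) := by simp only [mul_smul_comm]
    exact absurd (caseA A ρi ω hω hnp H hH hband hopt (P * H * P) hDh hD0 htHD htDH
      (h5.trans h6.symm)) not_false
  · -- eigenprojections of ρi
    intro c _ P hPh hPP hfix
    by_contra hD0
    obtain ⟨hBP, hPB⟩ := proj_eq ρi hρi.1.1 c P hPh hPP hfix
    have hDh : (P * H * P).IsHermitian := by
      show (P * H * P)ᴴ = P * H * P
      rw [Matrix.conjTranspose_mul, Matrix.conjTranspose_mul, hPh, hH]
      simp only [mul_assoc]
    have htHD : (H * (P * H * P)).trace = ((P * H * P) * (P * H * P)).trace :=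
      trace_PHP H P hPP
    have htDH : ((P * H * P) * H).trace = ((P * H * P) * (P * H * P)).trace := by
      rw [Matrix.trace_mul_comm]; exact htHD
    have h5 : (P * H * P) * ρi = (c : ℂ) • (P * H * P) := by
      calc (P * H * P) * ρi = P * H * (P * ρi) := by simp only [mul_assoc]
        _ = P * H * ((c : ℂ) • P) := by rw [hPB]
        _ = (c : ℂ) • (P * H * P) := by simp only [mul_smul_comm]
    have h6 : ρi * (P * H * P) = (c : ℂ) • (P * H * P) := by
      calc ρi * (P * H * P) = ρi * P * H * P := by simp only [mul_assoc]
        _ = ((c : ℂ) • P) * H * P := by rw [hBP]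
        _ = (c : ℂ) • (P * H * P) := by simp only [smul_mul_assoc]
    exact absurd (caseRho A ρi ω hω hnp H hH hband hopt (P * H * P) hDh hD0 htHD htDH
      (h5.trans h6.symm)) not_false


end QSLPaper
end
end

section
/- The duration of a complete discharge process is at least the passivization time: if τ ≥ 0, V : [0,τ] → {Hermitian n×n matrices} is continuous with tr(V(t)²) ≤ ω² for all t, and ρ : [0,τ] → M_n(ℂ) is differentiable with ρ(0) = ρ_i, ρ'(t) = -i[H + V(t), ρ(t)] for all t, and ρ(τ) passive, then τ ≥ τ_pas. -/
open Matrix Kronecker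
open scoped ComplexOrder

attribute [local instance] Matrix.frobeniusSeminormedAddCommGroup
  Matrix.frobeniusNormedAddCommGroup Matrix.frobeniusNormedSpace

noncomputable section

namespace QSLPaper

attribute [local instance] Matrix.frobeniusNormedRing Matrix.frobeniusNormedAlgebra

section Aux

variable {n : ℕ}

/-- Interaction-picture construction: conjugating the evolution by `exp(t • iH)` turns a
drive `H + V t` into the drive `exp(t•iH) V t exp(-t•iH)`, preserving bandwidth and passivity. -/
theorem interaction_picture_reaches
    (H ρi : Matrix (Fin n) (Fin n) ℂ)
    (hH : H.IsHermitian)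
    (ω : ℝ)
    (τ : ℝ) (hτ : 0 ≤ τ)
    (V ρ : ℝ → Matrix (Fin n) (Fin n) ℂ)
    (hVc : ContinuousOn V (Set.Icc 0 τ))
    (hVh : ∀ t ∈ Set.Icc (0:ℝ) τ, (V t).IsHermitian)
    (hVb : ∀ t ∈ Set.Icc (0:ℝ) τ, ((V t * V t).trace).re ≤ ω^2)
    (hρ0 : ρ 0 = ρi)
    (hode : ∀ t ∈ Set.Icc (0:ℝ) τ,
      HasDerivWithinAt ρ ((-Complex.I) • ((H + V t) * ρ t - ρ t * (H + V t)))
        (Set.Icc 0 τ) t)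
    (hfin : IsPassive H ρi (ρ τ)) :
    ReachesIn ρi (IsPassive H ρi) (ω^2) τ := by
  classical
  set A : Matrix (Fin n) (Fin n) ℂ := Complex.I • H with hA
  set E : ℝ → Matrix (Fin n) (Fin n) ℂ := fun t => NormedSpace.exp (t • A) with hE
  set F : ℝ → Matrix (Fin n) (Fin n) ℂ := fun t => NormedSpace.exp (t • (-A)) with hF
  have hE' : ∀ t : ℝ, HasDerivAt E (E t * A) t := fun t => hasDerivAt_exp_smul_const A t
  have hF' : ∀ t : ℝ, HasDerivAt F (F t * (-A)) t := fun t => hasDerivAt_exp_smul_const (-A) t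
  have hcomm0 : ∀ t : ℝ, Commute (t • A) (t • (-A)) := by
    intro t
    exact (((Commute.refl A).neg_right).smul_left t).smul_right t
  have hEF : ∀ t : ℝ, E t * F t = 1 := by
    intro t
    rw [hE, hF]
    beta_reduce
    erw [← NormedSpace.exp_add_of_commute (hcomm0 t)]
    simp
  have hFE : ∀ t : ℝ, F t * E t = 1 := by
    intro t
    rw [hE, hF]
    beta_reduce
    erw [← NormedSpace.exp_add_of_commute (hcomm0 t).symm]
    simp
  have hAE : ∀ t : ℝ, Commute A (E t) := fun t =>
    (((Commute.refl A).smul_right t)).exp_right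
  have hAF : ∀ t : ℝ, Commute A (F t) := fun t =>
    ((((Commute.refl A).neg_right).smul_right t)).exp_right
  have hHA : Commute H A := by
    rw [hA]
    exact (Commute.refl H).smul_right _
  have hHE : ∀ t : ℝ, Commute H (E t) := fun t =>
    ((hHA.smul_right t)).exp_right
  have hHF : ∀ t : ℝ, Commute H (F t) := fun t =>
    (((hHA.neg_right).smul_right t)).exp_right
  have hAH : Aᴴ = -A := by
    rw [hA]
    rw [Matrix.conjTranspose_smul, hH.eq]
    simp
  have hEH : ∀ t : ℝ, (E t)ᴴ = F t := by
    intro t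
    rw [hE, hF, ← Matrix.exp_conjTranspose]
    congr 1
    have hs : (t • A)ᴴ = t • Aᴴ := by
      ext i j; simp [Matrix.conjTranspose_apply]
    rw [hs, hAH, smul_neg, ← smul_neg]
  have hFH : ∀ t : ℝ, (F t)ᴴ = E t := by
    intro t
    rw [hE, hF, ← Matrix.exp_conjTranspose]
    congr 1
    have hs : (t • -A)ᴴ = t • (-A)ᴴ := by
      ext i j; simp [Matrix.conjTranspose_apply]
    rw [hs]
    congr 1
    rw [Matrix.conjTranspose_neg, hAH, neg_neg]
  have hEc : Continuous E := continuous_iff_continuousAt.2 fun t => (hE' t).continuousAt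
  have hFc : Continuous F := continuous_iff_continuousAt.2 fun t => (hF' t).continuousAt
  refine ⟨fun t => E t * V t * F t, fun t => E t * ρ t * F t, ?_, ?_, ?_, ?_, ?_, ?_⟩
  · exact ((hEc.continuousOn.mul hVc).mul hFc.continuousOn)
  · intro t ht
    unfold Matrix.IsHermitian
    simp only [Matrix.conjTranspose_mul, hEH, hFH, (hVh t ht).eq]
    rw [mul_assoc]
  · intro t ht
    have h1 : E t * V t * F t * (E t * V t * F t) = E t * (V t * V t) * F t := by
      calc E t * V t * F t * (E t * V t * F t)
          = E t * V t * (F t * E t) * V t * F t := by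
            simp only [mul_assoc]
        _ = E t * (V t * V t) * F t := by rw [hFE]; simp only [mul_one, mul_assoc]
    rw [h1]
    have h2 : (E t * (V t * V t) * F t).trace = (V t * V t).trace := by
      rw [mul_assoc, Matrix.trace_mul_comm, mul_assoc, hFE, mul_one]
    rw [h2]
    exact hVb t ht
  · have hE0 : E 0 = 1 := by rw [hE]; simp
    have hF0 : F 0 = 1 := by rw [hF]; simp
    show E 0 * ρ 0 * F 0 = ρi
    rw [hE0, hF0, hρ0, one_mul, mul_one]
  · intro t ht
    have hD := ((hE' t).hasDerivWithinAt.mul (hode t ht)).mul (hF' t).hasDerivWithinAt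
    convert hD using 1
    case e'_4 => rfl
    case e'_5 => rfl
    case e'_6 => rfl
    case e'_8 => rfl
    have hVρ : E t * V t * F t * (E t * ρ t * F t) = E t * (V t * ρ t) * F t := by
      calc E t * V t * F t * (E t * ρ t * F t)
          = E t * V t * (F t * E t) * ρ t * F t := by
            simp only [mul_assoc]
        _ = E t * (V t * ρ t) * F t := by rw [hFE]; simp only [mul_one, mul_assoc]
    have hρV : E t * ρ t * F t * (E t * V t * F t) = E t * (ρ t * V t) * F t := by
      calc E t * ρ t * F t * (E t * V t * F t)
          = E t * ρ t * (F t * E t) * V t * F t := by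
            simp only [mul_assoc]
        _ = E t * (ρ t * V t) * F t := by rw [hFE]; simp only [mul_one, mul_assoc]
    rw [hVρ, hρV]
    have hFA : F t * (-A) = -A * F t := ((hAF t).neg_left).symm.eq
    rw [hFA]
    have expand : (E t * A * ρ t + E t * ((-Complex.I) •
          ((H + V t) * ρ t - ρ t * (H + V t)))) * F t + E t * ρ t * (-A * F t)
        = E t * (A * ρ t + (-Complex.I) • ((H + V t) * ρ t - ρ t * (H + V t))
            - ρ t * A) * F t := by
      noncomm_ring
    rw [Pi.mul_apply]
    rw [expand]
    congr 1
    congr 1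
    rw [hA]
    simp only [add_mul, mul_add, smul_sub, smul_add, Matrix.smul_mul, Matrix.mul_smul,
      sub_mul, mul_sub]
    module
  · intro W hW
    have key : (E τ * ρ τ * F τ * H).trace = (ρ τ * H).trace := by
      have h1 : E τ * ρ τ * F τ * H = E τ * (ρ τ * (H * F τ)) := by
        simp only [mul_assoc]
        rw [(hHF τ).eq]
      rw [h1, Matrix.trace_mul_comm, mul_assoc, mul_assoc, hFE, mul_one]
    rw [key]
    exact hfin W hW

end Aux

/-- the duration of a complete discharge process of a quantum battery with
internal Hamiltonian `H` is at least the passivization time. -/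
theorem discharge_duration_ge_tauPas
    {n : ℕ} (hn : 1 ≤ n) (H ρi : Matrix (Fin n) (Fin n) ℂ)
    (hH : H.IsHermitian) (hρi : IsDensity ρi) (hcomm : H * ρi = ρi * H)
    (ω : ℝ) (hω : 0 < ω)
    (τ : ℝ) (hτ : 0 ≤ τ)
    (V ρ : ℝ → Matrix (Fin n) (Fin n) ℂ)
    (hVc : ContinuousOn V (Set.Icc 0 τ))
    (hVh : ∀ t ∈ Set.Icc (0:ℝ) τ, (V t).IsHermitian)
    (hVb : ∀ t ∈ Set.Icc (0:ℝ) τ, ((V t * V t).trace).re ≤ ω^2)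
    (hρ0 : ρ 0 = ρi)
    (hode : ∀ t ∈ Set.Icc (0:ℝ) τ,
      HasDerivWithinAt ρ ((-Complex.I) • ((H + V t) * ρ t - ρ t * (H + V t)))
        (Set.Icc 0 τ) t)
    (hfin : IsPassive H ρi (ρ τ)) :
    τ ≥ tauPas H ρi ω := by
  have hmem : τ ∈ {τ | 0 ≤ τ ∧ ReachesIn ρi (IsPassive H ρi) (ω^2) τ} :=
    ⟨hτ, interaction_picture_reaches H ρi hH ω τ hτ V ρ hVc hVh hVb hρ0 hode hfin⟩
  exact csInf_le ⟨0, fun x hx => hx.1⟩ hmem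


end QSLPaper
end
end

section
/- The passivization time is a tight bound on the duration of complete discharge processes: assume there exists a Hermitian matrix V_I with tr(V_I²) ≤ ω² such that exp(-iτ_pas·V_I)·ρ_i·exp(iτ_pas·V_I) is passive. Then for every ε > 0 there exist τ ∈ [τ_pas, τ_pas + ε], a continuous V : ℝ → {Hermitian n×n matrices} with V(t) = 0 for all t ∉ (0,τ) and tr(V(t)²) ≤ ω² for all t, and a differentiable ρ : [0,τ] → M_n(ℂ) with ρ(0) = ρ_i, ρ'(t) = -i[H + V(t), ρ(t)] for all t ∈ [0,τ], and ρ(τ) passive. -/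
open Matrix Kronecker
open scoped ComplexOrder

attribute [local instance] Matrix.frobeniusSeminormedAddCommGroup
  Matrix.frobeniusNormedAddCommGroup Matrix.frobeniusNormedSpace

noncomputable section

namespace QSLPaper

/-! ### Auxiliary lemmas -/

attribute [local instance] Matrix.frobeniusNormedRing Matrix.frobeniusNormedAlgebra

open NormedSpace in
private lemma exp_mul_exp_neg' {n : ℕ} (A : Matrix (Fin n) (Fin n) ℂ) (c : ℂ) :
    exp (c • A) * exp ((-c) • A) = 1 := by
  rw [← Matrix.exp_add_of_commute]
  · simp [← add_smul]
  · exact ((Commute.refl A).smul_left c).smul_right (-c)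

private lemma trace_sq_re_nonneg {n : ℕ} (A : Matrix (Fin n) (Fin n) ℂ) (hA : A.IsHermitian) :
    0 ≤ ((A * A).trace).re := by
  have h : (A * A).trace = ∑ i, ∑ j, A i j * star (A i j) := by
    simp only [Matrix.trace, Matrix.diag, Matrix.mul_apply]
    refine Finset.sum_congr rfl fun i _ => Finset.sum_congr rfl fun j _ => ?_
    rw [show A j i = star (A i j) from by conv_lhs => rw [← hA.eq, Matrix.conjTranspose_apply]]
  rw [h, Complex.re_sum]
  refine Finset.sum_nonneg fun i _ => ?_
  rw [Complex.re_sum]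
  refine Finset.sum_nonneg fun j _ => ?_
  simp only [Complex.mul_re, Complex.star_def, Complex.conj_re, Complex.conj_im]
  nlinarith [sq_nonneg (A i j).re, sq_nonneg (A i j).im]

open intervalIntegral in
private lemma bump_integral {T δ : ℝ} (hδ0 : 0 < δ) (hδT : δ ≤ T) :
    ∫ s in (0:ℝ)..(T + δ), max 0 (min 1 (min s ((T + δ) - s) / δ)) = T := by
  have hfc : Continuous fun t : ℝ => max 0 (min 1 (min t ((T + δ) - t) / δ)) := by fun_prop
  have hsplit1 := integral_add_adjacent_intervals
    (a := (0:ℝ)) (b := δ) (c := T + δ) (μ := MeasureTheory.volume)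
    (Continuous.intervalIntegrable hfc _ _) (Continuous.intervalIntegrable hfc _ _)
  have hsplit2 := integral_add_adjacent_intervals
    (a := δ) (b := T) (c := T + δ) (μ := MeasureTheory.volume)
    (Continuous.intervalIntegrable hfc _ _) (Continuous.intervalIntegrable hfc _ _)
  have hI1 : ∫ s in (0:ℝ)..δ, max 0 (min 1 (min s ((T + δ) - s) / δ)) = δ / 2 := by
    rw [integral_congr (g := fun s => s / δ) ?_]
    · rw [integral_div, integral_id]; field_simp; ring
    · intro s hs
      rw [Set.uIcc_of_le hδ0.le] at hs
      obtain ⟨h1, h2⟩ := hs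
      show max 0 (min 1 (min s ((T + δ) - s) / δ)) = s / δ
      rw [show min s ((T + δ) - s) = s from min_eq_left (by linarith),
        min_eq_right (by rw [div_le_one hδ0]; linarith), max_eq_right (by positivity)]
  have hI2 : ∫ s in δ..T, max 0 (min 1 (min s ((T + δ) - s) / δ)) = T - δ := by
    rw [integral_congr (g := fun _ => (1:ℝ)) ?_]
    · rw [integral_const]; simp
    · intro s hs
      rw [Set.uIcc_of_le hδT] at hs
      obtain ⟨h1, h2⟩ := hs
      show max 0 (min 1 (min s ((T + δ) - s) / δ)) = 1
      have e1 : (1:ℝ) ≤ min s ((T + δ) - s) / δ := by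
        rw [le_div_iff₀ hδ0, one_mul, le_min_iff]
        exact ⟨h1, by linarith⟩
      rw [min_eq_left e1, max_eq_right zero_le_one]
  have hI3 : ∫ s in T..(T + δ), max 0 (min 1 (min s ((T + δ) - s) / δ)) = δ / 2 := by
    rw [integral_congr (g := fun s => ((T + δ) - s) / δ) ?_]
    · rw [integral_div, integral_comp_sub_left (fun x => x) (T + δ), integral_id]
      field_simp; ring
    · intro s hs
      rw [Set.uIcc_of_le (by linarith)] at hs
      obtain ⟨h1, h2⟩ := hs
      show max 0 (min 1 (min s ((T + δ) - s) / δ)) = ((T + δ) - s) / δ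
      rw [show min s ((T + δ) - s) = (T + δ) - s from min_eq_right (by linarith),
        min_eq_right (by rw [div_le_one hδ0]; linarith),
        max_eq_right (by apply div_nonneg <;> linarith)]
  rw [← hsplit1, ← hsplit2, hI1, hI2, hI3]; ring

open NormedSpace in
private lemma deriv_main {n : ℕ} (H VI ρi : Matrix (Fin n) (Fin n) ℂ) (f F : ℝ → ℝ)
    (hF : ∀ s, HasDerivAt F (f s) s) (t : ℝ) :
    HasDerivAt
      (fun s : ℝ => exp ((-Complex.I * (s:ℂ)) • H) *
        (exp ((-Complex.I * (F s:ℂ)) • VI) *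
          (ρi * (exp ((Complex.I * (F s:ℂ)) • VI) * exp ((Complex.I * (s:ℂ)) • H)))))
      ((-Complex.I) •
        ((H + (f t : ℂ) • (exp ((-Complex.I * (t:ℂ)) • H) *
            (VI * exp ((Complex.I * (t:ℂ)) • H)))) *
          (exp ((-Complex.I * (t:ℂ)) • H) *
            (exp ((-Complex.I * (F t:ℂ)) • VI) *
              (ρi * (exp ((Complex.I * (F t:ℂ)) • VI) * exp ((Complex.I * (t:ℂ)) • H))))) -
         (exp ((-Complex.I * (t:ℂ)) • H) *
            (exp ((-Complex.I * (F t:ℂ)) • VI) *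
              (ρi * (exp ((Complex.I * (F t:ℂ)) • VI) * exp ((Complex.I * (t:ℂ)) • H))))) *
          (H + (f t : ℂ) • (exp ((-Complex.I * (t:ℂ)) • H) *
            (VI * exp ((Complex.I * (t:ℂ)) • H)))))) t := by
  set U : Matrix (Fin n) (Fin n) ℂ := exp ((-Complex.I * (t:ℂ)) • H) with hU
  set Wm : Matrix (Fin n) (Fin n) ℂ := exp ((Complex.I * (t:ℂ)) • H) with hWm
  set B : Matrix (Fin n) (Fin n) ℂ := exp ((-Complex.I * (F t:ℂ)) • VI) with hB
  set Bi : Matrix (Fin n) (Fin n) ℂ := exp ((Complex.I * (F t:ℂ)) • VI) with hBi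
  have hc1 : HasDerivAt (fun s : ℝ => -Complex.I * (s:ℂ)) (-Complex.I) t := by
    simpa using (hasDerivAt_id t).ofReal_comp.const_mul (-Complex.I)
  have hc4 : HasDerivAt (fun s : ℝ => Complex.I * (s:ℂ)) Complex.I t := by
    simpa using (hasDerivAt_id t).ofReal_comp.const_mul Complex.I
  have hc2 : HasDerivAt (fun s : ℝ => -Complex.I * (F s:ℂ)) (-Complex.I * (f t:ℂ)) t :=
    (hF t).ofReal_comp.const_mul _
  have hc3 : HasDerivAt (fun s : ℝ => Complex.I * (F s:ℂ)) (Complex.I * (f t:ℂ)) t :=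
    (hF t).ofReal_comp.const_mul _
  have h1 : HasDerivAt (fun s : ℝ => exp ((-Complex.I * (s:ℂ)) • H))
      ((-Complex.I) • (H * U)) t :=
    by have := (hasDerivAt_exp_smul_const' (𝕂 := ℂ) H (-Complex.I * (t:ℂ))).scomp t hc1; exact this
  have h4 : HasDerivAt (fun s : ℝ => exp ((Complex.I * (s:ℂ)) • H))
      (Complex.I • (H * Wm)) t :=
    by have := (hasDerivAt_exp_smul_const' (𝕂 := ℂ) H (Complex.I * (t:ℂ))).scomp t hc4; exact this
  have h2 : HasDerivAt (fun s : ℝ => exp ((-Complex.I * (F s:ℂ)) • VI))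
      ((-Complex.I * (f t:ℂ)) • (VI * B)) t :=
    by have := (hasDerivAt_exp_smul_const' (𝕂 := ℂ) VI (-Complex.I * (F t:ℂ))).scomp t hc2; exact this
  have h3 : HasDerivAt (fun s : ℝ => exp ((Complex.I * (F s:ℂ)) • VI))
      ((Complex.I * (f t:ℂ)) • (VI * Bi)) t :=
    by have := (hasDerivAt_exp_smul_const' (𝕂 := ℂ) VI (Complex.I * (F t:ℂ))).scomp t hc3; exact this
  have h5 := h3.mul h4
  have h6 := h5.const_mul ρi
  have h7 := h2.mul h6
  have h8 := h1.mul h7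
  convert h8 using 1
  · rfl
  · rfl
  · rfl
  · rfl
  have hWU : ∀ X : Matrix (Fin n) (Fin n) ℂ, Wm * (U * X) = X := by
    intro X
    rw [← mul_assoc, hWm, hU, show (-Complex.I * (t:ℂ)) = -(Complex.I * (t:ℂ)) by ring,
      exp_mul_exp_neg', one_mul]
  have hBiVI : ∀ X : Matrix (Fin n) (Fin n) ℂ, Bi * (VI * X) = VI * (Bi * X) := by
    intro X
    rw [← mul_assoc, ← mul_assoc]
    congr 1
    exact ((((Commute.refl VI).smul_left (Complex.I * (F t:ℂ)))).exp_left).eq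
  have hWmH : Wm * H = H * Wm :=
    ((((Commute.refl H).smul_left (Complex.I * (t:ℂ)))).exp_left).eq
  simp only [mul_add, add_mul, mul_sub, sub_mul, smul_mul_assoc, mul_smul_comm, smul_smul,
    smul_sub, smul_add, mul_assoc, hWU, hBiVI, hWmH]
  module

open NormedSpace in
/-- the passivization time is a tight bound on the duration of complete
discharge processes: there are complete discharge processes of duration arbitrarily close
to `τ_pas`. -/
theorem tauPas_tight_for_discharge
    {n : ℕ} (hn : 1 ≤ n) (H ρi : Matrix (Fin n) (Fin n) ℂ)
    (hH : H.IsHermitian) (hρi : IsDensity ρi) (hcomm : H * ρi = ρi * H)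
    (ω : ℝ) (hω : 0 < ω)
    (VI : Matrix (Fin n) (Fin n) ℂ) (hVI : VI.IsHermitian)
    (hVIb : ((VI * VI).trace).re ≤ ω^2)
    (hVIopt : IsPassive H ρi
      (exp ((-(Complex.I) * ((tauPas H ρi ω : ℝ) : ℂ)) • VI) * ρi *
        exp ((Complex.I * ((tauPas H ρi ω : ℝ) : ℂ)) • VI))) :
    ∀ ε > (0:ℝ), ∃ τ ∈ Set.Icc (tauPas H ρi ω) (tauPas H ρi ω + ε),
      ∃ V : ℝ → Matrix (Fin n) (Fin n) ℂ,
        Continuous V ∧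
        (∀ t, t ∉ Set.Ioo (0:ℝ) τ → V t = 0) ∧
        (∀ t, (V t).IsHermitian) ∧
        (∀ t, ((V t * V t).trace).re ≤ ω^2) ∧
        ∃ ρ : ℝ → Matrix (Fin n) (Fin n) ℂ,
          ρ 0 = ρi ∧
          (∀ t ∈ Set.Icc (0:ℝ) τ,
            HasDerivWithinAt ρ ((-Complex.I) • ((H + V t) * ρ t - ρ t * (H + V t)))
              (Set.Icc 0 τ) t) ∧
          IsPassive H ρi (ρ τ) := by
  intro ε hε
  set T := tauPas H ρi ω with hTdef
  have hT0 : 0 ≤ T := Real.sInf_nonneg fun x hx => hx.1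
  set δ : ℝ := min ε T with hδdef
  have hδ0 : 0 ≤ δ := le_min hε.le hT0
  have hδT : δ ≤ T := min_le_right _ _
  have hδε : δ ≤ ε := min_le_left _ _
  set τ : ℝ := T + δ with hτdef
  have hτT : T ≤ τ := le_add_of_nonneg_right hδ0
  -- the bump profile
  set f : ℝ → ℝ := fun t => max 0 (min 1 (min t (τ - t) / δ)) with hfdef
  have hfc : Continuous f := by
    rw [hfdef]; fun_prop
  have hf0 : ∀ t, 0 ≤ f t := fun t => le_max_left _ _
  have hf1 : ∀ t, f t ≤ 1 := fun t => max_le zero_le_one (min_le_left _ _)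
  have hfsupp : ∀ t, t ∉ Set.Ioo (0:ℝ) τ → f t = 0 := by
    intro t ht
    rw [Set.mem_Ioo, not_and_or, not_lt, not_lt] at ht
    have hq : min t (τ - t) / δ ≤ 0 := by
      apply div_nonpos_of_nonpos_of_nonneg _ hδ0
      rcases ht with h | h
      · exact (min_le_left _ _).trans h
      · exact (min_le_right _ _).trans (by linarith)
    exact max_eq_left ((min_le_right 1 _).trans hq)
  set F : ℝ → ℝ := fun t => ∫ s in (0:ℝ)..t, f s with hFdef
  have hF' : ∀ s, HasDerivAt F (f s) s := fun s =>
    (hfc.integral_hasStrictDerivAt 0 s).hasDerivAt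
  have hF0 : F 0 = 0 := intervalIntegral.integral_same
  have hFτ : F τ = T := by
    rcases eq_or_lt_of_le hT0 with h0 | hTpos
    · have hδz : δ = 0 := le_antisymm (hδT.trans h0.symm.le) hδ0
      have hτz : τ = 0 := by rw [hτdef, ← h0, hδz, add_zero]
      rw [hτz, hF0, ← h0]
    · have hδpos : 0 < δ := lt_min hε hTpos
      have := bump_integral (T := T) (δ := δ) hδpos hδT
      rw [hFdef]
      simpa [hfdef, hτdef] using this
  -- the driving interaction and the state trajectory
  set Uf : ℝ → Matrix (Fin n) (Fin n) ℂ :=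
    fun s => NormedSpace.exp ((-Complex.I * (s:ℂ)) • H) with hUf
  set Wf : ℝ → Matrix (Fin n) (Fin n) ℂ :=
    fun s => NormedSpace.exp ((Complex.I * (s:ℂ)) • H) with hWf
  set Bf : ℝ → Matrix (Fin n) (Fin n) ℂ :=
    fun s => NormedSpace.exp ((-Complex.I * (F s:ℂ)) • VI) with hBf
  set Bif : ℝ → Matrix (Fin n) (Fin n) ℂ :=
    fun s => NormedSpace.exp ((Complex.I * (F s:ℂ)) • VI) with hBif
  set Vf : ℝ → Matrix (Fin n) (Fin n) ℂ :=
    fun s => (f s : ℂ) • (Uf s * (VI * Wf s)) with hVf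
  set ρf : ℝ → Matrix (Fin n) (Fin n) ℂ :=
    fun s => Uf s * (Bf s * (ρi * (Bif s * Wf s))) with hρf
  have hUWc : ∀ c : ℂ, Continuous fun s : ℝ =>
      NormedSpace.exp ((c * (s:ℂ)) • H) := fun c =>
    NormedSpace.exp_continuous.comp
      ((continuous_const.mul Complex.continuous_ofReal).smul continuous_const)
  have hconjU : ∀ s : ℝ, (Uf s)ᴴ = Wf s := by
    intro s
    rw [hUf, hWf]
    rw [← Matrix.exp_conjTranspose]
    congr 1
    rw [Matrix.conjTranspose_smul, hH.eq]
    simp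
  have hconjW : ∀ s : ℝ, (Wf s)ᴴ = Uf s := by
    intro s
    rw [hUf, hWf]
    rw [← Matrix.exp_conjTranspose]
    congr 1
    rw [Matrix.conjTranspose_smul, hH.eq]
    simp
  have hWU : ∀ s : ℝ, Wf s * Uf s = 1 := by
    intro s
    simpa [hUf, hWf, neg_mul, neg_smul] using exp_mul_exp_neg' H (Complex.I * (s:ℂ))
  have hWmH : ∀ s : ℝ, Wf s * H = H * Wf s := fun s =>
    ((((Commute.refl H).smul_left (Complex.I * (s:ℂ)))).exp_left).eq
  refine ⟨τ, ⟨hτT, by rw [hτdef]; linarith⟩, Vf, ?_, ?_, ?_, ?_, ρf, ?_, ?_, ?_⟩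
  · -- continuity
    rw [hVf]
    exact (Complex.continuous_ofReal.comp hfc).smul
      ((hUWc _).mul (continuous_const.mul (hUWc _)))
  · -- support
    intro t ht
    rw [hVf]
    simp only [hfsupp t ht, Complex.ofReal_zero, zero_smul]
  · -- hermitian
    intro t
    show (Vf t)ᴴ = Vf t
    rw [hVf]
    simp only [Matrix.conjTranspose_smul, Matrix.conjTranspose_mul, hconjU t, hconjW t,
      hVI.eq, Complex.star_def, Complex.conj_ofReal, mul_assoc]
  · -- bandwidth bound
    intro t
    have hM : (Vf t * Vf t).trace = ((f t * f t : ℝ) : ℂ) * (VI * VI).trace := by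
      rw [hVf]
      simp only [smul_mul_assoc, mul_smul_comm, smul_smul, Matrix.trace_smul, smul_eq_mul,
        Complex.ofReal_mul, mul_assoc]
      congr 1
      have e1 : Uf t * (VI * (Wf t * (Uf t * (VI * Wf t)))) = Uf t * (VI * (VI * Wf t)) := by
        rw [← mul_assoc (Wf t), hWU t, one_mul]
      rw [e1, Matrix.trace_mul_comm, mul_assoc, mul_assoc, hWU t, mul_one]
    have hre : ((Vf t * Vf t).trace).re = (f t * f t) * ((VI * VI).trace).re := by
      rw [hM, Complex.re_ofReal_mul]
    rw [hre]
    have h1 := trace_sq_re_nonneg VI hVI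
    have h2 := hf0 t
    have h3 := hf1 t
    have h4 : f t * f t ≤ 1 := by nlinarith
    have h5 := mul_le_mul_of_nonneg_right h4 h1
    linarith
  · -- initial condition
    rw [hρf, hUf, hWf, hBf, hBif]
    simp only [hF0, Complex.ofReal_zero, mul_zero, zero_smul, NormedSpace.exp_zero,
      one_mul, mul_one]
  · -- the equation of motion
    intro t _
    exact (deriv_main H VI ρi f F hF' t).hasDerivWithinAt
  · -- final passivity
    intro Vu hVu
    have h0 := hVIopt Vu hVu
    refine le_trans (le_of_eq ?_) h0
    congr 1
    have e1 : ρf τ * H = Uf τ * ((Bf τ * (ρi * (Bif τ * H))) * Wf τ) := by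
      rw [hρf]
      simp only [mul_assoc]
      rw [hWmH τ]
    rw [e1, Matrix.trace_mul_comm, mul_assoc, hWU τ, mul_one]
    simp only [hBf, hBif]
    rw [hFτ]
    simp only [mul_assoc]


end QSLPaper
end
end
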